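/- arXiv:2105.11779 — 4 statements merged into one kernel-verified Lean document; each statement's English description precedes it below -/
import Mathlib

section
/- Every irrational p-adic number ξ satisfies μ̂×(ξ) ≤ (5 + √5)/2. -/
open Filter MeasureTheory
open scoped ENNReal

/-- A `p`-adic number is irrational if it is not the image of a rational number. -/
def PadicIrrational (p : ℕ) [Fact p.Prime] (ξ : ℚ_[p]) : Prop :=
  ∀ q : ℚ, (q : ℚ_[p]) ≠ ξ

/-- The irrationality exponent `μ(ξ)` of a `p`-adic number `ξ`: the supremum (in `[0,∞]`)
of the real numbers `m` such that `0 < |yξ - x|_p ≤ max(|x|,|y|)^(-m)` has infinitely many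
solutions in nonzero integers `x, y`. -/
noncomputable def muExp (p : ℕ) [Fact p.Prime] (ξ : ℚ_[p]) : ℝ≥0∞ :=
  sSup (ENNReal.ofReal '' {m : ℝ |
    {q : ℤ × ℤ | q.1 ≠ 0 ∧ q.2 ≠ 0 ∧
      0 < ‖(q.2 : ℚ_[p]) * ξ - (q.1 : ℚ_[p])‖ ∧
      ‖(q.2 : ℚ_[p]) * ξ - (q.1 : ℚ_[p])‖ ≤ (max |(q.1 : ℝ)| |(q.2 : ℝ)|) ^ (-m)}.Infinite})

/-- The multiplicative irrationality exponent `μ×(ξ)`: the supremum of the real numbers `m`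
such that `0 < |yξ - x|_p ≤ (|xy|^(1/2))^(-m)` has infinitely many solutions in nonzero
integers `x, y`. -/
noncomputable def muTimesExp (p : ℕ) [Fact p.Prime] (ξ : ℚ_[p]) : ℝ≥0∞ :=
  sSup (ENNReal.ofReal '' {m : ℝ |
    {q : ℤ × ℤ | q.1 ≠ 0 ∧ q.2 ≠ 0 ∧
      0 < ‖(q.2 : ℚ_[p]) * ξ - (q.1 : ℚ_[p])‖ ∧
      ‖(q.2 : ℚ_[p]) * ξ - (q.1 : ℚ_[p])‖ ≤ (Real.sqrt |(q.1 : ℝ) * (q.2 : ℝ)|) ^ (-m)}.Infinite})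

/-- The uniform irrationality exponent `μ̂(ξ)`: the supremum of the real numbers `m` such that
for every sufficiently large real `X` the system
`0 < max(|x|,|y|) ≤ X`, `|yξ - x|_p ≤ X^(-m)` has an integer solution. -/
noncomputable def muHatExp (p : ℕ) [Fact p.Prime] (ξ : ℚ_[p]) : ℝ≥0∞ :=
  sSup (ENNReal.ofReal '' {m : ℝ | ∀ᶠ X : ℝ in atTop, ∃ x y : ℤ,
    0 < max |(x : ℝ)| |(y : ℝ)| ∧ max |(x : ℝ)| |(y : ℝ)| ≤ X ∧
    ‖(y : ℚ_[p]) * ξ - (x : ℚ_[p])‖ ≤ X ^ (-m)})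

/-- The uniform multiplicative irrationality exponent `μ̂×(ξ)`: the supremum of the real
numbers `m` such that for every sufficiently large real `X` the system
`0 < |xy|^(1/2) ≤ X`, `|yξ - x|_p ≤ X^(-m)` has an integer solution. -/
noncomputable def muHatTimesExp (p : ℕ) [Fact p.Prime] (ξ : ℚ_[p]) : ℝ≥0∞ :=
  sSup (ENNReal.ofReal '' {m : ℝ | ∀ᶠ X : ℝ in atTop, ∃ x y : ℤ,
    0 < Real.sqrt |(x : ℝ) * (y : ℝ)| ∧ Real.sqrt |(x : ℝ) * (y : ℝ)| ≤ X ∧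
    ‖(y : ℚ_[p]) * ξ - (x : ℚ_[p])‖ ≤ X ^ (-m)})

section Aux
variable (p : ℕ) [Fact p.Prime] (ξ : ℚ_[p])

/-- the p-adic error of the vector (a,b) -/
noncomputable def ccErr (a b : ℤ) : ℝ := ‖(b : ℚ_[p]) * ξ - (a : ℚ_[p])‖

/-- the multiplicative height of the vector (a,b) -/
noncomputable def htt (a b : ℤ) : ℝ := Real.sqrt |(a : ℝ) * (b : ℝ)|

lemma int_norm_lower : ∀ n : ℕ, ∀ z : ℤ, z.natAbs ≤ n → z ≠ 0 →
    1 ≤ ‖(z : ℚ_[p])‖ * |(z : ℝ)| := by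
  intro n
  induction n with
  | zero =>
    intro z hz h0
    exact absurd (Int.natAbs_eq_zero.mp (Nat.le_zero.mp hz)) h0
  | succ n ih =>
    intro z hz h0
    rcases lt_or_eq_of_le (Padic.norm_int_le_one (p := p) z) with h1 | h1
    · rw [Padic.norm_intCast_lt_one_iff] at h1
      obtain ⟨t, rfl⟩ := h1
      have hp2 : 2 ≤ p := (Fact.out : p.Prime).two_le
      have ht0 : t ≠ 0 := by rintro rfl; simp at h0
      have htn : t.natAbs ≤ n := by
        have : (p : ℤ).natAbs * t.natAbs = ((p:ℤ)*t).natAbs := (Int.natAbs_mul _ _).symm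
        have h1 : 1 ≤ t.natAbs := Int.natAbs_pos.mpr ht0
        simp [Int.natAbs_natCast] at this
        nlinarith [hz, this]
      have := ih t htn ht0
      have hnp : ‖(p : ℚ_[p])‖ = (p : ℝ)⁻¹ := Padic.norm_p
      have : ‖(((p:ℤ)*t : ℤ) : ℚ_[p])‖ * |(((p:ℤ)*t : ℤ) : ℝ)| =
          ‖(t : ℚ_[p])‖ * |(t : ℝ)| := by
        push_cast
        rw [norm_mul, abs_mul, hnp]
        have hppos : (0:ℝ) < p := by positivity
        rw [abs_of_pos hppos]
        field_simp
      rw [this]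
      exact ih t htn ht0
    · have : (1:ℝ) ≤ |(z:ℝ)| := by
        rw [← Int.cast_abs]
        exact_mod_cast Int.one_le_abs h0
      nlinarith
end Aux

section Aux2
variable (p : ℕ) [Fact p.Prime] (ξ : ℚ_[p])

lemma int_norm_lower' (z : ℤ) (h0 : z ≠ 0) : 1 ≤ ‖(z : ℚ_[p])‖ * |(z : ℝ)| :=
  int_norm_lower p z.natAbs z le_rfl h0

lemma ccErr_pos (hξ : PadicIrrational p ξ) (a b : ℤ) (hb : b ≠ 0) :
    0 < ccErr p ξ a b := by
  rw [ccErr]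
  rcases eq_or_lt_of_le (norm_nonneg ((b : ℚ_[p]) * ξ - (a : ℚ_[p]))) with h | h
  · exfalso
    have h0 : (b : ℚ_[p]) * ξ - (a : ℚ_[p]) = 0 := by
      rw [← norm_eq_zero]; exact h.symm
    have hbp : (b : ℚ_[p]) ≠ 0 := by exact_mod_cast hb
    have : ξ = ((a : ℚ)/(b : ℚ) : ℚ) := by
      push_cast
      field_simp
      linear_combination h0
    exact hξ _ this.symm
  · exact h

lemma htt_pos (a b : ℤ) (ha : a ≠ 0) (hb : b ≠ 0) : 0 < htt a b := by
  rw [htt]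
  apply Real.sqrt_pos.mpr
  rw [abs_pos]
  exact mul_ne_zero (by exact_mod_cast ha) (by exact_mod_cast hb)

lemma one_le_htt (a b : ℤ) (ha : a ≠ 0) (hb : b ≠ 0) : 1 ≤ htt a b := by
  rw [htt]
  rw [show (1:ℝ) = Real.sqrt 1 by simp]
  apply Real.sqrt_le_sqrt
  rw [← Int.cast_mul, ← Int.cast_abs]
  exact_mod_cast Int.one_le_abs (mul_ne_zero ha hb)

/-- squared height -/
lemma htt_sq (a b : ℤ) : htt a b * htt a b = |(a:ℝ)| * |(b:ℝ)| := by
  rw [htt, Real.mul_self_sqrt (abs_nonneg _), abs_mul]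

end Aux2

section Fact1
variable (p : ℕ) [Fact p.Prime] (ξ : ℚ_[p])

/-- A good vector at scale `X`. -/
def GoodV (m X : ℝ) (v : ℤ × ℤ) : Prop :=
  1 ≤ v.1 ∧ v.2 ≠ 0 ∧ IsCoprime v.1 v.2 ∧ htt v.1 v.2 ≤ X ∧
    ccErr p ξ v.1 v.2 * htt v.1 v.2 ≤ X ^ (1 - m)

lemma good_of_sol (hξ : PadicIrrational p ξ) (m X : ℝ) (hX : 1 ≤ X) (x y : ℤ)
    (hpos : 0 < Real.sqrt |(x : ℝ) * (y : ℝ)|)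
    (hle : Real.sqrt |(x : ℝ) * (y : ℝ)| ≤ X)
    (herr : ‖(y : ℚ_[p]) * ξ - (x : ℚ_[p])‖ ≤ X ^ (-m)) :
    ∃ v : ℤ × ℤ, GoodV p ξ m X v := by
  have hX0 : (0:ℝ) < X := lt_of_lt_of_le one_pos hX
  have hxy : (x : ℝ) * (y : ℝ) ≠ 0 := by
    intro h; rw [h] at hpos; simp at hpos
  have hx0 : x ≠ 0 := by
    intro h; apply hxy; rw [h]; simp
  have hy0 : y ≠ 0 := by
    intro h; apply hxy; rw [h]; simp
  set g : ℤ := (Int.gcd x y : ℤ) with hgdef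
  have hg0 : 0 < g := by
    rw [hgdef]
    exact_mod_cast Int.gcd_pos_of_ne_zero_left y hx0
  have hgx : g ∣ x := Int.gcd_dvd_left x y
  have hgy : g ∣ y := Int.gcd_dvd_right x y
  set a0 : ℤ := x / g with ha0def
  set b0 : ℤ := y / g with hb0def
  have hxa : x = g * a0 := (Int.mul_ediv_cancel' hgx).symm
  have hyb : y = g * b0 := (Int.mul_ediv_cancel' hgy).symm
  have ha00 : a0 ≠ 0 := by
    intro h; apply hx0; rw [hxa, h, mul_zero]
  have hb00 : b0 ≠ 0 := by
    intro h; apply hy0; rw [hyb, h, mul_zero]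
  have hcop : IsCoprime a0 b0 := by
    rw [Int.isCoprime_iff_gcd_eq_one]
    apply Int.gcd_div_gcd_div_gcd
    rw [hgdef] at hg0
    exact_mod_cast hg0
  -- error decomposition
  have hdecomp : ‖(y : ℚ_[p]) * ξ - (x : ℚ_[p])‖ = ‖(g : ℚ_[p])‖ * ccErr p ξ a0 b0 := by
    rw [ccErr, ← norm_mul]
    congr 1
    rw [hxa, hyb]
    push_cast
    ring
  -- height decomposition
  have hht : htt x y = (g : ℝ) * htt a0 b0 := by
    rw [htt, htt, hxa, hyb]
    push_cast
    rw [show ((g:ℝ) * a0 * ((g:ℝ) * b0)) = (g:ℝ)^2 * ((a0:ℝ) * b0) by ring,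
      abs_mul, abs_of_nonneg (sq_nonneg (g:ℝ)), Real.sqrt_mul (sq_nonneg _),
      Real.sqrt_sq (by positivity)]
  have hgnorm : 1 ≤ ‖(g : ℚ_[p])‖ * (g : ℝ) := by
    have := int_norm_lower' p g (by omega)
    rwa [abs_of_pos (by exact_mod_cast hg0)] at this
  have hhtle : htt a0 b0 ≤ X := by
    have h1 : (g:ℝ) * htt a0 b0 ≤ X := by rw [← hht]; exact hle
    have h2 : (1:ℝ) ≤ (g:ℝ) := by exact_mod_cast hg0
    nlinarith [htt_pos a0 b0 ha00 hb00]
  -- main chain : c * H ≤ (‖g‖ g) (c H) = (‖g‖ c)(g H) ≤ X^{-m} X = X^{1-m}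
  have hchain : ccErr p ξ a0 b0 * htt a0 b0 ≤ X ^ (1 - m) := by
    have e1 : ‖(g : ℚ_[p])‖ * ccErr p ξ a0 b0 ≤ X ^ (-m) := by
      rw [← hdecomp]; exact herr
    have e2 : (g : ℝ) * htt a0 b0 ≤ X := by rw [← hht]; exact hle
    have hc0 : 0 < ccErr p ξ a0 b0 := ccErr_pos p ξ hξ a0 b0 hb00
    have hH0 : 0 < htt a0 b0 := htt_pos a0 b0 ha00 hb00
    have key : ccErr p ξ a0 b0 * htt a0 b0 ≤
        (‖(g : ℚ_[p])‖ * ccErr p ξ a0 b0) * ((g : ℝ) * htt a0 b0) := by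
      nlinarith [hgnorm, norm_nonneg ((g : ℚ_[p])), hc0.le, hH0.le,
        mul_pos hc0 hH0]
    have key2 : (‖(g : ℚ_[p])‖ * ccErr p ξ a0 b0) * ((g : ℝ) * htt a0 b0) ≤
        X ^ (-m) * X := by
      apply mul_le_mul e1 e2 (by positivity) (by positivity)
    have key3 : X ^ (-m) * X = X ^ (1 - m) := by
      rw [show (1 - m) = -m + 1 by ring, Real.rpow_add hX0, Real.rpow_one]
    linarith
  -- sign normalization
  rcases le_or_gt 1 a0 with hsgn | hsgn
  · exact ⟨(a0, b0), hsgn, hb00, hcop, hhtle, hchain⟩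
  · refine ⟨(-a0, -b0), by omega, by simpa using hb00, hcop.neg_neg, ?_, ?_⟩
    · have : htt (-a0) (-b0) = htt a0 b0 := by
        rw [htt, htt]; push_cast; ring_nf
      rw [this]; exact hhtle
    · have h1 : htt (-a0) (-b0) = htt a0 b0 := by
        rw [htt, htt]; push_cast; ring_nf
      have h2 : ccErr p ξ (-a0) (-b0) = ccErr p ξ a0 b0 := by
        rw [ccErr, ccErr]
        rw [show ((-b0 : ℤ) : ℚ_[p]) * ξ - ((-a0 : ℤ) : ℚ_[p]) =
          -(((b0 : ℤ) : ℚ_[p]) * ξ - ((a0 : ℤ) : ℚ_[p])) by push_cast; ring]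
        exact norm_neg _
      rw [h1, h2]; exact hchain
end Fact1

section Finiteness

lemma htt_finite (R : ℝ) :
    {v : ℤ × ℤ | v.1 ≠ 0 ∧ v.2 ≠ 0 ∧ htt v.1 v.2 ≤ R}.Finite := by
  have hsub : {v : ℤ × ℤ | v.1 ≠ 0 ∧ v.2 ≠ 0 ∧ htt v.1 v.2 ≤ R} ⊆
      (Set.Icc (⌊-(R^2)⌋ - 1) (⌈R^2⌉ + 1)) ×ˢ (Set.Icc (⌊-(R^2)⌋ - 1) (⌈R^2⌉ + 1)) := by
    rintro ⟨a, b⟩ ⟨ha, hb, hR⟩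
    have h1 : (1:ℝ) ≤ |(b:ℝ)| := by
      rw [← Int.cast_abs]; exact_mod_cast Int.one_le_abs hb
    have h1a : (1:ℝ) ≤ |(a:ℝ)| := by
      rw [← Int.cast_abs]; exact_mod_cast Int.one_le_abs ha
    have hprod : |(a:ℝ)| * |(b:ℝ)| ≤ R^2 := by
      have := htt_sq a b
      have hR0 : 0 ≤ R := le_trans (htt_pos a b ha hb).le hR
      nlinarith [htt_pos a b ha hb]
    have hA : |(a:ℝ)| ≤ R^2 := by nlinarith
    have hB : |(b:ℝ)| ≤ R^2 := by nlinarith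
    constructor <;> constructor
    · have : -(R^2) ≤ (a:ℝ) := by cases abs_le.mp hA; linarith
      have := Int.floor_le_floor (R := ℝ) this
      rw [Int.floor_intCast] at this
      omega
    · have : (a:ℝ) ≤ R^2 := (abs_le.mp hA).2
      have := Int.ceil_le_ceil (R := ℝ) this
      rw [Int.ceil_intCast] at this
      omega
    · have : -(R^2) ≤ (b:ℝ) := by cases abs_le.mp hB; linarith
      have := Int.floor_le_floor (R := ℝ) this
      rw [Int.floor_intCast] at this
      omega
    · have : (b:ℝ) ≤ R^2 := (abs_le.mp hB).2
      have := Int.ceil_le_ceil (R := ℝ) this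
      rw [Int.ceil_intCast] at this
      omega
  exact Set.Finite.subset (Set.Finite.prod (Set.finite_Icc _ _) (Set.finite_Icc _ _)) hsub

end Finiteness

section Claim
variable (p : ℕ) [Fact p.Prime] (ξ : ℚ_[p])

/-- Strictly good vector at scale `X`. -/
def GoodVS (m X : ℝ) (v : ℤ × ℤ) : Prop :=
  1 ≤ v.1 ∧ v.2 ≠ 0 ∧ IsCoprime v.1 v.2 ∧ htt v.1 v.2 ≤ X ∧
    ccErr p ξ v.1 v.2 * htt v.1 v.2 < X ^ (1 - m)

lemma strict_claim (m X₁ : ℝ) (hm : 1 < m) (hX₁ : 2 ≤ X₁)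
    (Hyp : ∀ X ≥ X₁, ∃ v, GoodV p ξ m X v) :
    ∀ X ≥ X₁, ∃ v, GoodVS p ξ m X v := by
  intro X hX
  have hX0 : (0:ℝ) < X := by linarith
  -- choose good vectors at scales X + 1/(n+1)
  have hsel : ∀ n : ℕ, ∃ v, GoodV p ξ m (X + 1/(n+1)) v := by
    intro n
    apply Hyp
    have : (0:ℝ) < 1/(n+1) := by positivity
    linarith
  choose v hv using hsel
  -- they all live in a finite set
  set S : Set (ℤ × ℤ) := {w : ℤ × ℤ | w.1 ≠ 0 ∧ w.2 ≠ 0 ∧ htt w.1 w.2 ≤ X + 1} with hSdef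
  have hSfin : S.Finite := htt_finite (X + 1)
  have hmem : ∀ n, v n ∈ S := by
    intro n
    obtain ⟨h1, h2, _, h4, _⟩ := hv n
    refine ⟨by omega, h2, le_trans h4 ?_⟩
    have : (1:ℝ)/(n+1) ≤ 1 := by
      rw [div_le_one (by positivity)]
      have : (0:ℝ) ≤ n := Nat.cast_nonneg n
      linarith
    linarith
  haveI := hSfin.to_subtype
  obtain ⟨w, hw⟩ := Finite.exists_infinite_fiber (fun n : ℕ => (⟨v n, hmem n⟩ : S))
  have hwfib : {n : ℕ | v n = (w : ℤ × ℤ)}.Infinite := by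
    rw [← Set.infinite_coe_iff] at *
    apply Set.infinite_coe_iff.mpr
    apply Set.Infinite.mono (s := (fun n : ℕ => (⟨v n, hmem n⟩ : S)) ⁻¹' {w})
    · intro n hn
      simp only [Set.mem_preimage, Set.mem_singleton_iff] at hn
      simp only [Set.mem_setOf_eq]
      exact congrArg Subtype.val hn
    · exact Set.infinite_coe_iff.mp hw
  -- properties of w
  obtain ⟨n₀, hn₀, _⟩ := hwfib.exists_gt 0
  have hgood₀ := hv n₀
  rw [Set.mem_setOf_eq] at hn₀
  rw [hn₀] at hgood₀
  obtain ⟨g1, g2, g3, _, g5⟩ := hgood₀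
  refine ⟨w, g1, g2, g3, ?_, ?_⟩
  · -- htt w ≤ X
    by_contra hcon
    push_neg at hcon
    obtain ⟨N, hN⟩ := exists_nat_gt (1/(htt (w : ℤ × ℤ).1 (w : ℤ × ℤ).2 - X))
    obtain ⟨n, hn, hnN⟩ := hwfib.exists_gt N
    rw [Set.mem_setOf_eq] at hn
    have hgood := hv n
    rw [hn] at hgood
    obtain ⟨_, _, _, h4, _⟩ := hgood
    have hd : (0:ℝ) < htt (w : ℤ × ℤ).1 (w : ℤ × ℤ).2 - X := by linarith
    have h1n : (1:ℝ)/(n+1) < htt (w : ℤ × ℤ).1 (w : ℤ × ℤ).2 - X := by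
      rw [div_lt_iff₀ (by positivity)]
      rw [div_lt_iff₀ hd] at hN
      have hNn : (N:ℝ) < n + 1 := by exact_mod_cast Nat.lt_succ_of_lt hnN
      nlinarith
    linarith
  · -- strict inequality
    calc ccErr p ξ (w:ℤ×ℤ).1 (w:ℤ×ℤ).2 * htt (w:ℤ×ℤ).1 (w:ℤ×ℤ).2
        ≤ (X + 1/(n₀+1)) ^ (1 - m) := g5
      _ < X ^ (1 - m) := by
          apply Real.rpow_lt_rpow_of_neg hX0 ?_ (by linarith)
          have : (0:ℝ) < 1/(n₀+1) := by positivity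
          linarith

end Claim

section Seq
variable (p : ℕ) [Fact p.Prime] (ξ : ℚ_[p])

lemma seq_exists (hξ : PadicIrrational p ξ) (m X₁ : ℝ) (hm : 1 < m) (hX₁ : 2 ≤ X₁)
    (Claim : ∀ X ≥ X₁, ∃ v, GoodVS p ξ m X v) :
    ∃ (Xs : ℕ → ℝ) (vs : ℕ → ℤ × ℤ),
      (∀ k, X₁ ≤ Xs k) ∧ (∀ k, Xs k < Xs (k+1)) ∧
      (∀ k, 1 ≤ (vs k).1) ∧ (∀ k, (vs k).2 ≠ 0) ∧
      (∀ k, IsCoprime (vs k).1 (vs k).2) ∧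
      (∀ k, htt (vs k).1 (vs k).2 ≤ Xs k) ∧
      (∀ k, ccErr p ξ (vs k).1 (vs k).2 * htt (vs k).1 (vs k).2 = Xs (k+1) ^ (1 - m)) := by
  classical
  set F : ℝ → ℤ × ℤ := fun X => if h : X ≥ X₁ then (Claim X h).choose else (1, 1) with hF
  have hFspec : ∀ X ≥ X₁, GoodVS p ξ m X (F X) := by
    intro X h
    rw [hF]
    simp only [h, dif_pos]
    exact (Claim X h).choose_spec
  set T : ℝ → ℝ := fun X =>
    (ccErr p ξ (F X).1 (F X).2 * htt (F X).1 (F X).2) ^ (-(m-1)⁻¹) with hT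
  -- basic facts about one step
  have hm0 : m - 1 ≠ 0 := by linarith
  have step : ∀ X ≥ X₁, X < T X ∧
      ccErr p ξ (F X).1 (F X).2 * htt (F X).1 (F X).2 = (T X) ^ (1 - m) := by
    intro X h
    obtain ⟨g1, g2, g3, g4, g5⟩ := hFspec X h
    have hX0 : (0:ℝ) < X := by linarith
    have ha0 : (F X).1 ≠ 0 := by omega
    have hc0 : 0 < ccErr p ξ (F X).1 (F X).2 := ccErr_pos p ξ hξ _ _ g2
    have hH0 : 0 < htt (F X).1 (F X).2 := htt_pos _ _ ha0 g2
    have ht0 : 0 < ccErr p ξ (F X).1 (F X).2 * htt (F X).1 (F X).2 := mul_pos hc0 hH0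
    constructor
    · have h1 : (X ^ (1-m)) ^ (-(m-1)⁻¹) <
          (ccErr p ξ (F X).1 (F X).2 * htt (F X).1 (F X).2) ^ (-(m-1)⁻¹) := by
        apply Real.rpow_lt_rpow_of_neg ht0 g5
        rw [neg_lt_zero, inv_pos]
        linarith
      have h2 : (X ^ (1-m)) ^ (-(m-1)⁻¹) = X := by
        rw [← Real.rpow_mul hX0.le]
        rw [show (1-m) * (-(m-1)⁻¹) = (m-1) * (m-1)⁻¹ by ring,
          mul_inv_cancel₀ hm0, Real.rpow_one]
      show X < (ccErr p ξ (F X).1 (F X).2 * htt (F X).1 (F X).2) ^ (-(m-1)⁻¹)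
      exact lt_of_le_of_lt h2.symm.le h1
    · rw [hT]
      simp only
      rw [← Real.rpow_mul ht0.le]
      rw [show (-(m-1)⁻¹) * (1 - m) = (m-1)⁻¹ * (m-1) by ring,
        inv_mul_cancel₀ hm0, Real.rpow_one]
  -- the sequence
  set Xs : ℕ → ℝ := fun k => Nat.rec X₁ (fun _ X => T X) k with hXs
  have hXs0 : Xs 0 = X₁ := rfl
  have hXsS : ∀ k, Xs (k+1) = T (Xs k) := fun k => rfl
  have hinv : ∀ k, X₁ ≤ Xs k := by
    intro k
    induction k with
    | zero => exact le_rfl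
    | succ k ih =>
      rw [hXsS]
      exact le_trans ih (step (Xs k) ih).1.le
  refine ⟨Xs, fun k => F (Xs k), hinv, ?_, ?_, ?_, ?_, ?_, ?_⟩
  · intro k; rw [hXsS]; exact (step (Xs k) (hinv k)).1
  · intro k; exact (hFspec (Xs k) (hinv k)).1
  · intro k; exact (hFspec (Xs k) (hinv k)).2.1
  · intro k; exact (hFspec (Xs k) (hinv k)).2.2.1
  · intro k; exact (hFspec (Xs k) (hinv k)).2.2.2.1
  · intro k; rw [hXsS]; exact (step (Xs k) (hinv k)).2
end Seq

section Unbounded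
variable (p : ℕ) [Fact p.Prime] (ξ : ℚ_[p])

lemma seq_unbounded (m X₁ : ℝ) (hm : 1 < m) (hX₁ : 2 ≤ X₁)
    (Xs : ℕ → ℝ) (vs : ℕ → ℤ × ℤ)
    (h0 : ∀ k, X₁ ≤ Xs k) (h1 : ∀ k, Xs k < Xs (k+1))
    (h2 : ∀ k, 1 ≤ (vs k).1) (h3 : ∀ k, (vs k).2 ≠ 0)
    (h5 : ∀ k, htt (vs k).1 (vs k).2 ≤ Xs k)
    (h6 : ∀ k, ccErr p ξ (vs k).1 (vs k).2 * htt (vs k).1 (vs k).2 = Xs (k+1) ^ (1 - m)) :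
    ∀ R : ℝ, ∃ k, R < Xs k := by
  intro R
  by_contra hcon
  push_neg at hcon
  have hmono : StrictMono Xs := strictMono_nat_of_lt_succ h1
  have hinj : Function.Injective vs := by
    intro j k hjk
    by_contra hne
    have key : Xs (j+1) = Xs (k+1) := by
      have e1 := h6 j
      have e2 := h6 k
      rw [hjk] at e1
      have e3 : Xs (j+1) ^ (1-m) = Xs (k+1) ^ (1-m) := by rw [← e1, ← e2]
      rcases lt_trichotomy (Xs (j+1)) (Xs (k+1)) with h | h | h
      · exfalso
        have := Real.rpow_lt_rpow_of_neg (lt_of_lt_of_le (by linarith) (h0 (j+1))) h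
          (by linarith : (1:ℝ) - m < 0)
        linarith [this, e3.le, e3.ge]
      · exact h
      · exfalso
        have := Real.rpow_lt_rpow_of_neg (lt_of_lt_of_le (by linarith) (h0 (k+1))) h
          (by linarith : (1:ℝ) - m < 0)
        linarith [this, e3.le, e3.ge]
    have : j + 1 = k + 1 := hmono.injective key
    omega
  have hrange : Set.range vs ⊆ {v : ℤ × ℤ | v.1 ≠ 0 ∧ v.2 ≠ 0 ∧ htt v.1 v.2 ≤ R} := by
    rintro v ⟨k, rfl⟩
    exact ⟨by have := h2 k; omega, h3 k, le_trans (h5 k) (hcon k)⟩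
  exact (Set.infinite_range_of_injective hinj) ((htt_finite R).subset hrange)

end Unbounded

section Det
variable (p : ℕ) [Fact p.Prime] (ξ : ℚ_[p])

lemma det_ineq (hξ : PadicIrrational p ξ) (v w : ℤ × ℤ)
    (hv1 : 1 ≤ v.1) (hv2 : v.2 ≠ 0) (hvc : IsCoprime v.1 v.2)
    (hw1 : 1 ≤ w.1) (hw2 : w.2 ≠ 0) (hwc : IsCoprime w.1 w.2)
    (hne : v ≠ w) :
    min (ccErr p ξ v.1 v.2)⁻¹ (ccErr p ξ w.1 w.2)⁻¹ ≤
      |(v.1:ℝ)| * |(w.2:ℝ)| + |(w.1:ℝ)| * |(v.2:ℝ)| := by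
  set d : ℤ := v.1 * w.2 - w.1 * v.2 with hd
  have hd0 : d ≠ 0 := by
    intro h
    have heq : v.1 * w.2 = w.1 * v.2 := by omega
    have hdvd1 : v.1 ∣ w.1 := by
      apply hvc.dvd_of_dvd_mul_right
      exact ⟨w.2, heq.symm⟩
    have hdvd2 : w.1 ∣ v.1 := by
      apply hwc.dvd_of_dvd_mul_right
      exact ⟨v.2, by linarith [heq]⟩
    have h11 : v.1 = w.1 := Int.dvd_antisymm (by omega) (by omega) hdvd1 hdvd2
    have h22 : w.2 = v.2 := by
      have : v.1 * w.2 = v.1 * v.2 := by rw [heq, h11]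
      exact mul_left_cancel₀ (by omega) this
    exact hne (Prod.ext h11 h22.symm)
  have hcv : 0 < ccErr p ξ v.1 v.2 := ccErr_pos p ξ hξ _ _ hv2
  have hcw : 0 < ccErr p ξ w.1 w.2 := ccErr_pos p ξ hξ _ _ hw2
  -- p-adic bound on d
  have hdnorm : ‖(d : ℚ_[p])‖ ≤ max (ccErr p ξ v.1 v.2) (ccErr p ξ w.1 w.2) := by
    have hid : (d : ℚ_[p]) = (v.2 : ℚ_[p]) * ((w.2 : ℚ_[p]) * ξ - (w.1 : ℚ_[p])) +
        (-(w.2 : ℚ_[p])) * ((v.2 : ℚ_[p]) * ξ - (v.1 : ℚ_[p])) := by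
      rw [hd]; push_cast; ring
    rw [hid]
    have b1 : ‖(v.2:ℚ_[p]) * ((w.2:ℚ_[p]) * ξ - (w.1:ℚ_[p]))‖ ≤ ccErr p ξ w.1 w.2 := by
      rw [norm_mul, ccErr]
      exact mul_le_of_le_one_left (norm_nonneg _) (Padic.norm_int_le_one (p := p) _)
    have b2 : ‖(-(w.2:ℚ_[p])) * ((v.2:ℚ_[p]) * ξ - (v.1:ℚ_[p]))‖ ≤ ccErr p ξ v.1 v.2 := by
      rw [norm_mul, norm_neg, ccErr]
      exact mul_le_of_le_one_left (norm_nonneg _) (Padic.norm_int_le_one (p := p) _)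
    exact le_trans (Padic.nonarchimedean _ _)
      (max_le (b1.trans (le_max_right _ _)) (b2.trans (le_max_left _ _)))
  have habs : 1 ≤ ‖(d : ℚ_[p])‖ * |(d:ℝ)| := int_norm_lower' p d hd0
  have hmaxpos : 0 < max (ccErr p ξ v.1 v.2) (ccErr p ξ w.1 w.2) := lt_max_of_lt_left hcv
  have hstep : (max (ccErr p ξ v.1 v.2) (ccErr p ξ w.1 w.2))⁻¹ ≤ |(d:ℝ)| := by
    rw [inv_le_iff_one_le_mul₀ hmaxpos]
    calc (1:ℝ) ≤ ‖(d : ℚ_[p])‖ * |(d:ℝ)| := habs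
      _ ≤ max (ccErr p ξ v.1 v.2) (ccErr p ξ w.1 w.2) * |(d:ℝ)| := by
          exact mul_le_mul_of_nonneg_right hdnorm (abs_nonneg _)
      _ = |(d:ℝ)| * max (ccErr p ξ v.1 v.2) (ccErr p ξ w.1 w.2) := mul_comm _ _
  have hmin : min (ccErr p ξ v.1 v.2)⁻¹ (ccErr p ξ w.1 w.2)⁻¹ =
      (max (ccErr p ξ v.1 v.2) (ccErr p ξ w.1 w.2))⁻¹ := by
    rcases le_total (ccErr p ξ v.1 v.2) (ccErr p ξ w.1 w.2) with h | h
    · rw [max_eq_right h, min_eq_right (by gcongr)]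
    · rw [max_eq_left h, min_eq_left (by gcongr)]
  rw [hmin]
  apply le_trans hstep
  calc |(d:ℝ)| ≤ |(v.1:ℝ) * (w.2:ℝ)| + |(w.1:ℝ) * (v.2:ℝ)| := by
        rw [hd]; push_cast; exact abs_sub _ _
    _ = |(v.1:ℝ)| * |(w.2:ℝ)| + |(w.1:ℝ)| * |(v.2:ℝ)| := by rw [abs_mul, abs_mul]

end Det

section FinalContra

/-- if `P*Q ≥ 0` then `|P - Q| ≤ max |P| |Q|` -/
lemma abs_sub_le_max (P Q : ℝ) (h : 0 ≤ P * Q) : |P - Q| ≤ max |P| |Q| := by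
  rcases le_total 0 P with hp | hp <;> rcases le_total 0 Q with hq | hq
  · have hP : |P| = P := abs_of_nonneg hp
    have hQ : |Q| = Q := abs_of_nonneg hq
    rw [abs_le]
    constructor <;>
      [linarith [le_max_right |P| |Q|]; linarith [le_max_left |P| |Q|]]
  · have h0 : P * Q = 0 := le_antisymm (mul_nonpos_of_nonneg_of_nonpos hp hq) h
    rcases mul_eq_zero.mp h0 with h0 | h0 <;> rw [h0] <;> simp
  · have h0 : P * Q = 0 := le_antisymm (mul_nonpos_of_nonpos_of_nonneg hp hq) h
    rcases mul_eq_zero.mp h0 with h0 | h0 <;> rw [h0] <;> simp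
  · have hP : |P| = -P := abs_of_nonpos hp
    have hQ : |Q| = -Q := abs_of_nonpos hq
    rw [abs_le]
    constructor <;>
      [linarith [le_max_left |P| |Q|]; linarith [le_max_right |P| |Q|]]

/-- if `P*R ≥ 0` then `|P - R| ≤ ||P| - |R||` -/
lemma abs_sub_le_abs_abs (P R : ℝ) (h : 0 ≤ P * R) : |P - R| ≤ |(|P| - |R|)| := by
  rcases le_total 0 P with hp | hp <;> rcases le_total 0 R with hr | hr
  · rw [abs_of_nonneg hp, abs_of_nonneg hr]
  · have h0 : P * R = 0 := le_antisymm (mul_nonpos_of_nonneg_of_nonpos hp hr) h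
    rcases mul_eq_zero.mp h0 with h0 | h0 <;> rw [h0] <;> simp
  · have h0 : P * R = 0 := le_antisymm (mul_nonpos_of_nonpos_of_nonneg hp hr) h
    rcases mul_eq_zero.mp h0 with h0 | h0 <;> rw [h0] <;> simp
  · rw [abs_of_nonpos hp, abs_of_nonpos hr, ← abs_neg (P - R),
      show -(P-R) = -P - -R by ring]

set_option maxHeartbeats 1000000 in
lemma final_contra (M C W X Y A B D P Q R : ℝ)
    (hM : (3 + Real.sqrt 5)/2 < M) (hC : 0 < C)
    (h1 : M*X ≤ C + max A B + |P - Q|)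
    (h2 : M*Y ≤ C + max B D + |Q - R|)
    (h3 : M*X ≤ C + max A D + |P - R|)
    (hPA : |P| ≤ A) (hAW : A ≤ W) (hWX : W ≤ X) (hXY : X ≤ Y)
    (hQB : |Q| ≤ B) (hBX : B ≤ X) (hRD : |R| ≤ D) (hDY : D ≤ Y)
    (hX1 : C < (M-2)*X) (hX2 : (M-1)*C < (M^2-3*M+1)*X)
    (hX3 : (M-1)*C < (M^2-2*M-1)*X) (hX4 : 2*C < (M-1)*X) : False := by
  have hs5 : Real.sqrt 5 ^ 2 = 5 := Real.sq_sqrt (by norm_num)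
  have hs5' : 2 < Real.sqrt 5 := by
    nlinarith [Real.sqrt_nonneg 5]
  have hM2 : 2 < M := by linarith
  have hX0 : 0 < X := by nlinarith
  have hY0 : 0 < Y := by linarith
  have hmAB : max A B ≤ X := max_le (le_trans hAW hWX) hBX
  have hmBD : max B D ≤ Y := max_le (le_trans hBX hXY) hDY
  have hmAD : max A D ≤ Y := max_le (le_trans hAW (le_trans hWX hXY)) hDY
  have hPX : |P| ≤ X := le_trans hPA (le_trans hAW hWX)
  have hQX : |Q| ≤ X := le_trans hQB hBX
  have hRY : |R| ≤ Y := le_trans hRD hDY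
  -- opposite signs for (P,Q) and (Q,R)
  have hPQ : P * Q < 0 := by
    by_contra hcon
    push_neg at hcon
    have habs := abs_sub_le_max P Q hcon
    have hm1 : max |P| |Q| ≤ X := max_le hPX hQX
    linarith
  have hQR : Q * R < 0 := by
    by_contra hcon
    push_neg at hcon
    have habs := abs_sub_le_max Q R hcon
    have hm1 : max |Q| |R| ≤ Y := max_le (le_trans hQX hXY) hRY
    have hMY : (M-2)*Y ≤ C := by linarith
    nlinarith [mul_le_mul_of_nonneg_left hXY (by linarith : (0:ℝ) ≤ M - 2)]
  have hPR : 0 ≤ P * R := by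
    by_contra hcon
    push_neg at hcon
    nlinarith [mul_pos_of_neg_of_neg hPQ hQR, sq_nonneg Q]
  -- lower bounds
  have hPlow : (M-2)*X - C ≤ |P| := by
    have habs : |P - Q| ≤ |P| + |Q| := abs_sub P Q
    linarith
  have hRlow : (M-2)*Y - C ≤ |R| := by
    have habs : |Q - R| ≤ |Q| + |R| := abs_sub Q R
    linarith
  have hbeta : (M-2)*Y ≤ X + C := by
    have habs : |Q - R| ≤ |Q| + |R| := abs_sub Q R
    linarith
  have hprabs := abs_sub_le_abs_abs P R hPR
  rcases le_total |P| |R| with hc | hc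
  · -- |P| ≤ |R|
    have e1 : |P - R| ≤ Y - ((M-2)*X - C) := by
      rw [abs_of_nonpos (sub_nonpos.mpr hc)] at hprabs
      linarith
    have e2 : (M-1)*X ≤ Y + C := by linarith
    linarith [mul_le_mul_of_nonneg_left e2 (by linarith : (0:ℝ) ≤ M - 2)]
  · -- |R| ≤ |P|
    have e1 : |P - R| ≤ X - ((M-2)*Y - C) := by
      rw [abs_of_nonneg (sub_nonneg.mpr hc)] at hprabs
      linarith
    have e3 : (M-1)*X ≤ (3-M)*Y + 2*C := by linarith
    rcases le_total 3 M with hM3 | hM3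
    · nlinarith [mul_nonpos_of_nonpos_of_nonneg (by linarith : (3:ℝ) - M ≤ 0) hY0.le]
    · linarith [mul_le_mul_of_nonneg_left hbeta (by linarith : (0:ℝ) ≤ 3 - M),
        mul_le_mul_of_nonneg_left e3 (by linarith : (0:ℝ) ≤ M - 2)]

end FinalContra

section Key
variable (p : ℕ) [Fact p.Prime] (ξ : ℚ_[p])

set_option maxHeartbeats 2000000 in
lemma key_ineq (hξ : PadicIrrational p ξ) (m : ℝ) (hm : 1 < m)
    (v w : ℤ × ℤ) (Xi Xj : ℝ) (hXi : 2 ≤ Xi) (hij : Xi ≤ Xj)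
    (hv1 : 1 ≤ v.1) (hv2 : v.2 ≠ 0) (hvc : IsCoprime v.1 v.2)
    (hw1 : 1 ≤ w.1) (hw2 : w.2 ≠ 0) (hwc : IsCoprime w.1 w.2)
    (hne : v ≠ w)
    (hcv : ccErr p ξ v.1 v.2 * htt v.1 v.2 = Xi ^ (1-m))
    (hcw : ccErr p ξ w.1 w.2 * htt w.1 w.2 = Xj ^ (1-m)) :
    (m-1) * Real.log Xi ≤ Real.log 2 +
      max ((Real.log |(v.1:ℝ)| + Real.log |(v.2:ℝ)|)/2)
          ((Real.log |(w.1:ℝ)| + Real.log |(w.2:ℝ)|)/2) +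
      |(Real.log |(v.1:ℝ)| - Real.log |(v.2:ℝ)|)/2 -
        (Real.log |(w.1:ℝ)| - Real.log |(w.2:ℝ)|)/2| := by
  have hXi0 : (0:ℝ) < Xi := by linarith
  have hXj0 : (0:ℝ) < Xj := by linarith
  have hv10 : v.1 ≠ 0 := by omega
  have hw10 : w.1 ≠ 0 := by omega
  set Av := |(v.1:ℝ)| with hAv
  set Bv := |(v.2:ℝ)| with hBv
  set Aw := |(w.1:ℝ)| with hAw
  set Bw := |(w.2:ℝ)| with hBw
  have hAv1 : 1 ≤ Av := by
    rw [hAv, ← Int.cast_abs]; exact_mod_cast Int.one_le_abs hv10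
  have hBv1 : 1 ≤ Bv := by
    rw [hBv, ← Int.cast_abs]; exact_mod_cast Int.one_le_abs hv2
  have hAw1 : 1 ≤ Aw := by
    rw [hAw, ← Int.cast_abs]; exact_mod_cast Int.one_le_abs hw10
  have hBw1 : 1 ≤ Bw := by
    rw [hBw, ← Int.cast_abs]; exact_mod_cast Int.one_le_abs hw2
  have hHv1 : 1 ≤ htt v.1 v.2 := one_le_htt _ _ hv10 hv2
  have hHw1 : 1 ≤ htt w.1 w.2 := one_le_htt _ _ hw10 hw2
  have hcv0 : 0 < ccErr p ξ v.1 v.2 := ccErr_pos p ξ hξ _ _ hv2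
  have hcw0 : 0 < ccErr p ξ w.1 w.2 := ccErr_pos p ξ hξ _ _ hw2
  -- inverses
  have hinv_v : (ccErr p ξ v.1 v.2)⁻¹ = Xi ^ (m-1) * htt v.1 v.2 := by
    apply inv_eq_of_mul_eq_one_right
    have : ccErr p ξ v.1 v.2 * (Xi ^ (m-1) * htt v.1 v.2) =
        (ccErr p ξ v.1 v.2 * htt v.1 v.2) * Xi ^ (m-1) := by ring
    rw [this, hcv, ← Real.rpow_add hXi0]
    norm_num
  have hinv_w : (ccErr p ξ w.1 w.2)⁻¹ = Xj ^ (m-1) * htt w.1 w.2 := by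
    apply inv_eq_of_mul_eq_one_right
    have : ccErr p ξ w.1 w.2 * (Xj ^ (m-1) * htt w.1 w.2) =
        (ccErr p ξ w.1 w.2 * htt w.1 w.2) * Xj ^ (m-1) := by ring
    rw [this, hcw, ← Real.rpow_add hXj0]
    norm_num
  -- the multiplicative inequality
  have hrpow_le : Xi ^ (m-1) ≤ Xj ^ (m-1) :=
    Real.rpow_le_rpow hXi0.le hij (by linarith)
  have hrpow_pos : (0:ℝ) < Xi ^ (m-1) := Real.rpow_pos_of_pos hXi0 _
  have hlb : Xi ^ (m-1) * min (htt v.1 v.2) (htt w.1 w.2) ≤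
      min (ccErr p ξ v.1 v.2)⁻¹ (ccErr p ξ w.1 w.2)⁻¹ := by
    apply le_min
    · rw [hinv_v]
      exact mul_le_mul le_rfl (min_le_left _ _)
        (le_min (by linarith) (by linarith)) hrpow_pos.le
    · rw [hinv_w]
      exact mul_le_mul hrpow_le (min_le_right _ _)
        (le_min (by linarith) (by linarith)) (by positivity)
  have hdet := det_ineq p ξ hξ v w hv1 hv2 hvc hw1 hw2 hwc hne
  have hcross : Av * Bw + Aw * Bv ≤ 2 * max (Av * Bw) (Aw * Bv) := by
    rcases max_cases (Av * Bw) (Aw * Bv) with ⟨h, h'⟩ | ⟨h, h'⟩ <;> rw [h] <;> linarith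
  have hmult : Xi ^ (m-1) * min (htt v.1 v.2) (htt w.1 w.2) ≤
      2 * max (Av * Bw) (Aw * Bv) :=
    le_trans (le_trans hlb hdet) hcross
  -- take logs
  have hminpos : (0:ℝ) < min (htt v.1 v.2) (htt w.1 w.2) := lt_min (by linarith) (by linarith)
  have hmaxpos : (0:ℝ) < max (Av * Bw) (Aw * Bv) :=
    lt_max_of_lt_left (by nlinarith)
  have hlog := (Real.log_le_log_iff (by positivity) (by positivity)).mpr hmult
  rw [Real.log_mul (by positivity) (by positivity),
    Real.log_mul (by norm_num) (by positivity),
    Real.log_rpow hXi0] at hlog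
  -- identify the logs
  have hlogHv : Real.log (htt v.1 v.2) = (Real.log Av + Real.log Bv)/2 := by
    rw [htt, Real.log_sqrt (abs_nonneg _), abs_mul, Real.log_mul (by positivity) (by positivity)]
  have hlogHw : Real.log (htt w.1 w.2) = (Real.log Aw + Real.log Bw)/2 := by
    rw [htt, Real.log_sqrt (abs_nonneg _), abs_mul, Real.log_mul (by positivity) (by positivity)]
  have hlogmin : Real.log (min (htt v.1 v.2) (htt w.1 w.2)) =
      min (Real.log (htt v.1 v.2)) (Real.log (htt w.1 w.2)) := by
    rcases le_total (htt v.1 v.2) (htt w.1 w.2) with h | h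
    · rw [min_eq_left h, min_eq_left ((Real.log_le_log_iff (by linarith) (by linarith)).mpr h)]
    · rw [min_eq_right h, min_eq_right ((Real.log_le_log_iff (by linarith) (by linarith)).mpr h)]
  have hlogmax : Real.log (max (Av * Bw) (Aw * Bv)) =
      max (Real.log Av + Real.log Bw) (Real.log Aw + Real.log Bv) := by
    rcases le_total (Av * Bw) (Aw * Bv) with h | h
    · rw [max_eq_right h, max_eq_right, Real.log_mul (by positivity) (by positivity)]
      rw [← Real.log_mul (by positivity) (by positivity),
        ← Real.log_mul (by positivity) (by positivity)]
      exact (Real.log_le_log_iff (by nlinarith) (by nlinarith)).mpr h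
    · rw [max_eq_left h, max_eq_left, Real.log_mul (by positivity) (by positivity)]
      rw [← Real.log_mul (by positivity) (by positivity),
        ← Real.log_mul (by positivity) (by positivity)]
      exact (Real.log_le_log_iff (by nlinarith) (by nlinarith)).mpr h
  rw [hlogmin, hlogmax, hlogHv, hlogHw] at hlog
  -- final arithmetic
  set av := Real.log Av
  set bv := Real.log Bv
  set aw := Real.log Aw
  set bw := Real.log Bw
  rcases abs_cases ((av - bv)/2 - (aw - bw)/2) with ⟨he, he'⟩ | ⟨he, he'⟩ <;>
    rw [he] <;>
    rcases min_cases ((av + bv)/2) ((aw + bw)/2) with ⟨hm1, hm1'⟩ | ⟨hm1, hm1'⟩ <;>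
    rw [hm1] at hlog <;>
    rcases max_cases ((av + bv)/2) ((aw + bw)/2) with ⟨hm3, hm3'⟩ | ⟨hm3, hm3'⟩ <;>
    rw [hm3] <;>
    rcases max_cases (av + bw) (aw + bv) with ⟨hm2, hm2'⟩ | ⟨hm2, hm2'⟩ <;>
    rw [hm2] at hlog <;> linarith

end Key

section Inj
variable (p : ℕ) [Fact p.Prime] (ξ : ℚ_[p])

lemma seq_ne (m X₁ : ℝ) (hm : 1 < m) (hX₁ : 2 ≤ X₁)
    (Xs : ℕ → ℝ) (vs : ℕ → ℤ × ℤ)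
    (h0 : ∀ k, X₁ ≤ Xs k) (h1 : ∀ k, Xs k < Xs (k+1))
    (h6 : ∀ k, ccErr p ξ (vs k).1 (vs k).2 * htt (vs k).1 (vs k).2 = Xs (k+1) ^ (1 - m))
    (j k : ℕ) (hjk : j < k) : vs j ≠ vs k := by
  intro heq
  have hmono : StrictMono Xs := strictMono_nat_of_lt_succ h1
  have e1 := h6 j
  have e2 := h6 k
  rw [heq] at e1
  have e3 : Xs (j+1) ^ (1-m) = Xs (k+1) ^ (1-m) := by rw [← e1, ← e2]
  have hlt : Xs (j+1) < Xs (k+1) := hmono (by omega)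
  have := Real.rpow_lt_rpow_of_neg (lt_of_lt_of_le (by linarith) (h0 (j+1))) hlt
    (by linarith : (1:ℝ) - m < 0)
  linarith [this, e3.le, e3.ge]

end Inj

lemma log_htt (a b : ℤ) (ha : a ≠ 0) (hb : b ≠ 0) :
    Real.log (htt a b) = (Real.log |(a:ℝ)| + Real.log |(b:ℝ)|)/2 := by
  have ha' : (0:ℝ) < |(a:ℝ)| := by
    rw [abs_pos]; exact_mod_cast ha
  have hb' : (0:ℝ) < |(b:ℝ)| := by
    rw [abs_pos]; exact_mod_cast hb
  rw [htt, Real.log_sqrt (abs_nonneg _), abs_mul, Real.log_mul (by positivity) (by positivity)]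

lemma log_abs_nonneg_int (a : ℤ) (ha : a ≠ 0) : 0 ≤ Real.log |(a:ℝ)| := by
  apply Real.log_nonneg
  rw [← Int.cast_abs]
  exact_mod_cast Int.one_le_abs ha

set_option maxHeartbeats 2000000 in
/-- Every irrational `p`-adic number `ξ` satisfies `μ̂×(ξ) ≤ (5 + √5)/2`. -/
theorem statement14 (p : ℕ) [Fact p.Prime] (ξ : ℚ_[p]) (hξ : PadicIrrational p ξ) :
    muHatTimesExp p ξ ≤ ENNReal.ofReal ((5 + Real.sqrt 5) / 2) := by
  rw [muHatTimesExp]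
  apply sSup_le
  rintro z ⟨m, hmS, rfl⟩
  apply ENNReal.ofReal_le_ofReal
  by_contra hgt
  push_neg at hgt
  simp only [Set.mem_setOf_eq] at hmS
  rw [eventually_atTop] at hmS
  obtain ⟨X₀, hX₀⟩ := hmS
  have hs5 : Real.sqrt 5 ^ 2 = 5 := Real.sq_sqrt (by norm_num)
  have hs5' : 2 < Real.sqrt 5 := by nlinarith [Real.sqrt_nonneg 5]
  have hm1 : 1 < m := by linarith
  set X₁ := max X₀ 2 with hX₁def
  have hX₁2 : (2:ℝ) ≤ X₁ := le_max_right _ _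
  have hyp : ∀ X ≥ X₁, ∃ v, GoodV p ξ m X v := by
    intro X hX
    obtain ⟨x, y, hp1, hp2, hp3⟩ := hX₀ X (le_trans (le_max_left _ _) hX)
    exact good_of_sol p ξ hξ m X (by linarith) x y hp1 hp2 hp3
  have claim := strict_claim p ξ m X₁ hm1 hX₁2 hyp
  obtain ⟨Xs, vs, s0, s1, s2, s3, s4, s5, s6⟩ := seq_exists p ξ hξ m X₁ hm1 hX₁2 claim
  have unbdd := seq_unbounded p ξ m X₁ hm1 hX₁2 Xs vs s0 s1 s2 s3 s5 s6
  set M := m - 1 with hM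
  set C := Real.log 2 with hC
  have hCpos : 0 < C := Real.log_pos (by norm_num)
  have hMgt : (3 + Real.sqrt 5)/2 < M := by rw [hM]; linarith
  have hM2 : 2 < M := by linarith
  have hd2 : 0 < M^2 - 3*M + 1 := by nlinarith
  have hd3 : 0 < M^2 - 2*M - 1 := by nlinarith
  set R : ℝ := C/(M-2) + (M-1)*C/(M^2-3*M+1) + (M-1)*C/(M^2-2*M-1) + 2*C/(M-1)
    with hRdef
  obtain ⟨k, hk⟩ := unbdd (Real.exp R)
  have hXs2 : ∀ i, (2:ℝ) ≤ Xs i := fun i => le_trans hX₁2 (s0 i)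
  have hXspos : ∀ i, (0:ℝ) < Xs i := fun i => lt_of_lt_of_le (by norm_num) (hXs2 i)
  have hmono : ∀ i j, i ≤ j → Xs i ≤ Xs j :=
    fun i j h => (strictMono_nat_of_lt_succ s1).monotone h
  have hlogR : R < Real.log (Xs (k+1)) := by
    rw [Real.lt_log_iff_exp_lt (hXspos _)]
    exact lt_of_lt_of_le hk (hmono k (k+1) (Nat.le_succ k))
  have hv0 : ∀ i, (vs i).1 ≠ 0 := fun i => by have := s2 i; omega
  -- the log data
  have hne1 := seq_ne p ξ m X₁ hm1 hX₁2 Xs vs s0 s1 s6 k (k+1) (by omega)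
  have hne2 := seq_ne p ξ m X₁ hm1 hX₁2 Xs vs s0 s1 s6 (k+1) (k+2) (by omega)
  have hne3 := seq_ne p ξ m X₁ hm1 hX₁2 Xs vs s0 s1 s6 k (k+2) (by omega)
  have key1 := key_ineq p ξ hξ m hm1 (vs k) (vs (k+1)) (Xs (k+1)) (Xs (k+2))
    (hXs2 _) (hmono _ _ (by omega)) (s2 k) (s3 k) (s4 k)
    (s2 (k+1)) (s3 (k+1)) (s4 (k+1)) hne1 (s6 k) (s6 (k+1))
  have key2 := key_ineq p ξ hξ m hm1 (vs (k+1)) (vs (k+2)) (Xs (k+2)) (Xs (k+3))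
    (hXs2 _) (hmono _ _ (by omega)) (s2 (k+1)) (s3 (k+1)) (s4 (k+1))
    (s2 (k+2)) (s3 (k+2)) (s4 (k+2)) hne2 (s6 (k+1)) (s6 (k+2))
  have key3 := key_ineq p ξ hξ m hm1 (vs k) (vs (k+2)) (Xs (k+1)) (Xs (k+3))
    (hXs2 _) (hmono (k+1) (k+3) (by omega)) (s2 k) (s3 k) (s4 k)
    (s2 (k+2)) (s3 (k+2)) (s4 (k+2)) hne3 (s6 k) (s6 (k+2))
  -- abbreviations for the log quantities
  have habs : ∀ i, |(Real.log |((vs i).1:ℝ)| - Real.log |((vs i).2:ℝ)|)/2| ≤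
      (Real.log |((vs i).1:ℝ)| + Real.log |((vs i).2:ℝ)|)/2 := by
    intro i
    have h1 := log_abs_nonneg_int (vs i).1 (hv0 i)
    have h2 := log_abs_nonneg_int (vs i).2 (s3 i)
    rw [abs_le]
    constructor <;> linarith
  have hhx : ∀ i, (Real.log |((vs i).1:ℝ)| + Real.log |((vs i).2:ℝ)|)/2 ≤
      Real.log (Xs i) := by
    intro i
    rw [← log_htt (vs i).1 (vs i).2 (hv0 i) (s3 i)]
    apply (Real.log_le_log_iff (lt_of_lt_of_le one_pos (one_le_htt _ _ (hv0 i) (s3 i)))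
      (hXspos i)).mpr (s5 i)
  have hlx : ∀ i j, i ≤ j → Real.log (Xs i) ≤ Real.log (Xs j) := by
    intro i j h
    exact (Real.log_le_log_iff (hXspos i) (hXspos j)).mpr (hmono i j h)
  -- thresholds
  have hRsum : C/(M-2) ≤ R ∧ (M-1)*C/(M^2-3*M+1) ≤ R ∧ (M-1)*C/(M^2-2*M-1) ≤ R ∧
      2*C/(M-1) ≤ R := by
    have p1 : 0 < C/(M-2) := div_pos hCpos (by linarith)
    have p2 : (0:ℝ) < (M-1)*C/(M^2-3*M+1) := div_pos (mul_pos (by linarith) hCpos) hd2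
    have p3 : (0:ℝ) < (M-1)*C/(M^2-2*M-1) := div_pos (mul_pos (by linarith) hCpos) hd3
    have p4 : (0:ℝ) < 2*C/(M-1) := div_pos (by linarith) (by linarith)
    refine ⟨by rw [hRdef]; linarith, by rw [hRdef]; linarith,
      by rw [hRdef]; linarith, by rw [hRdef]; linarith⟩
  have hT1 : C < (M-2) * Real.log (Xs (k+1)) := by
    have := lt_of_le_of_lt hRsum.1 hlogR
    rw [div_lt_iff₀ (by linarith)] at this
    linarith [this]
  have hT2 : (M-1)*C < (M^2-3*M+1) * Real.log (Xs (k+1)) := by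
    have := lt_of_le_of_lt hRsum.2.1 hlogR
    rw [div_lt_iff₀ hd2] at this
    linarith [this]
  have hT3 : (M-1)*C < (M^2-2*M-1) * Real.log (Xs (k+1)) := by
    have := lt_of_le_of_lt hRsum.2.2.1 hlogR
    rw [div_lt_iff₀ hd3] at this
    linarith [this]
  have hT4 : 2*C < (M-1) * Real.log (Xs (k+1)) := by
    have := lt_of_le_of_lt hRsum.2.2.2 hlogR
    rw [div_lt_iff₀ (by linarith)] at this
    linarith [this]
  exact final_contra M C (Real.log (Xs k)) (Real.log (Xs (k+1))) (Real.log (Xs (k+2)))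
    ((Real.log |((vs k).1:ℝ)| + Real.log |((vs k).2:ℝ)|)/2)
    ((Real.log |((vs (k+1)).1:ℝ)| + Real.log |((vs (k+1)).2:ℝ)|)/2)
    ((Real.log |((vs (k+2)).1:ℝ)| + Real.log |((vs (k+2)).2:ℝ)|)/2)
    ((Real.log |((vs k).1:ℝ)| - Real.log |((vs k).2:ℝ)|)/2)
    ((Real.log |((vs (k+1)).1:ℝ)| - Real.log |((vs (k+1)).2:ℝ)|)/2)
    ((Real.log |((vs (k+2)).1:ℝ)| - Real.log |((vs (k+2)).2:ℝ)|)/2)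
    hMgt hCpos key1 key2 key3
    (habs k) (hhx k) (hlx k (k+1) (by omega)) (hlx (k+1) (k+2) (by omega))
    (habs (k+1)) (hhx (k+1)) (habs (k+2)) (hhx (k+2))
    hT1 hT2 hT3 hT4
end

section
/- Every p-adic Liouville number ξ (that is, every irrational ξ ∈ ℚ_p with μ(ξ) = ∞) satisfies μ̂×(ξ) ≤ 3. -/
open Filter MeasureTheory
open scoped ENNReal

/-- For a nonzero integer `n`, `1 ≤ ‖n‖_p * |n|`. -/
lemma one_le_norm_mul_abs (p : ℕ) [Fact p.Prime] (n : ℤ) (hn : n ≠ 0) :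
    1 ≤ ‖(n : ℚ_[p])‖ * |(n : ℝ)| := by
  have hp1 : (1 : ℝ) < p := by exact_mod_cast (Fact.out : p.Prime).one_lt
  have hp0 : (0 : ℝ) < p := lt_trans one_pos hp1
  have hnz : ((n : ℚ_[p])) ≠ 0 := by exact_mod_cast hn
  have hval : ‖(n : ℚ_[p])‖ = (p : ℝ) ^ (-(padicValInt p n : ℤ)) := by
    rw [Padic.norm_eq_zpow_neg_valuation hnz, Padic.valuation_intCast]
  have hdvd : p ^ (padicValInt p n) ∣ n.natAbs := by
    unfold padicValInt
    exact pow_padicValNat_dvd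
  have hle : (p : ℝ) ^ (padicValInt p n) ≤ |(n : ℝ)| := by
    have h1 : p ^ (padicValInt p n) ≤ n.natAbs :=
      Nat.le_of_dvd (Int.natAbs_pos.mpr hn) hdvd
    have h2 : ((n.natAbs : ℤ) : ℝ) = |(n : ℝ)| := by
      rw [Nat.cast_natAbs]; push_cast; ring
    rw [← h2]
    exact_mod_cast h1
  calc (1 : ℝ) = (p : ℝ) ^ (-(padicValInt p n : ℤ)) * (p : ℝ) ^ (padicValInt p n) := by
        rw [← zpow_natCast (p : ℝ) (padicValInt p n), ← zpow_add₀ (ne_of_gt hp0)]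
        simp
    _ ≤ ‖(n : ℚ_[p])‖ * |(n : ℝ)| := by
        rw [hval]
        exact mul_le_mul_of_nonneg_left hle (by positivity)

lemma one_le_abs_cast (x : ℤ) (hx : x ≠ 0) : (1 : ℝ) ≤ |(x : ℝ)| := by
  have h : (1 : ℤ) ≤ |x| := Int.one_le_abs hx
  calc (1:ℝ) = ((1:ℤ):ℝ) := by norm_num
    _ ≤ ((|x| : ℤ) : ℝ) := by exact_mod_cast h
    _ = |(x : ℝ)| := by push_cast; ring

set_option maxHeartbeats 1000000 in
/-- Every `p`-adic Liouville number (irrational `ξ` with `μ(ξ) = ∞`) satisfies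
`μ̂×(ξ) ≤ 3`. -/
theorem statement15 (p : ℕ) [Fact p.Prime] (ξ : ℚ_[p]) (hξ : PadicIrrational p ξ)
    (hLiouville : muExp p ξ = ⊤) :
    muHatTimesExp p ξ ≤ 3 := by
  refine sSup_le ?_
  rintro a ⟨m, hm, rfl⟩
  by_contra hcon
  push_neg at hcon
  have hm3 : (3 : ℝ) < m := by
    by_contra h
    push_neg at h
    have : ENNReal.ofReal m ≤ 3 := by
      calc ENNReal.ofReal m ≤ ENNReal.ofReal 3 := ENNReal.ofReal_le_ofReal h
        _ = 3 := by norm_num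
    exact absurd this (not_le.mpr hcon)
  have hm1 : (0:ℝ) < m - 1 := by linarith
  have hm1' : m - 1 ≠ 0 := ne_of_gt hm1
  have hm30 : (0:ℝ) < m - 3 := by linarith
  -- get the threshold X₀
  obtain ⟨X₀', hX₀'⟩ := eventually_atTop.1 hm
  set X₀ : ℝ := max X₀' 1 with hX₀def
  have hX₀1 : (1 : ℝ) ≤ X₀ := le_max_right _ _
  have hX₀0 : (0 : ℝ) ≤ X₀ := by linarith
  -- the Liouville exponent we shall use
  set w : ℝ := 2*(m-1)/(m-3) + 1 with hwdef
  have hw1 : (1 : ℝ) ≤ w := by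
    have h0 : (0:ℝ) ≤ 2*(m-1)/(m-3) := by positivity
    rw [hwdef]; linarith
  have hwkey : (2 : ℝ) ≤ w * ((m-3)/(m-1)) := by
    have heq : w * ((m-3)/(m-1)) = 2 + (m-3)/(m-1) := by
      rw [hwdef]
      field_simp
    have h0 : (0:ℝ) ≤ (m-3)/(m-1) := by positivity
    linarith [heq.ge, heq.le]
  -- pick a Liouville-quality solution set
  have hlt : ENNReal.ofReal w < muExp p ξ := by
    rw [hLiouville]; exact ENNReal.ofReal_lt_top
  rw [muExp, lt_sSup_iff] at hlt
  obtain ⟨b, ⟨m', hm'set, rfl⟩, hb⟩ := hlt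
  have hwm' : w < m' := by
    by_contra h
    push_neg at h
    exact absurd (ENNReal.ofReal_le_ofReal h) (not_le.mpr hb)
  -- a solution of large height
  set H₀ : ℝ := max (X₀ ^ (m-1)) 9 with hH₀def
  have hfin : {q : ℤ × ℤ | max |(q.1 : ℝ)| |(q.2 : ℝ)| ≤ H₀}.Finite := by
    refine Set.Finite.subset (Set.Finite.prod (Set.finite_Icc (-⌈H₀⌉) ⌈H₀⌉)
      (Set.finite_Icc (-⌈H₀⌉) ⌈H₀⌉)) ?_
    intro q hq
    simp only [Set.mem_setOf_eq, max_le_iff] at hq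
    have h1 : |(q.1 : ℝ)| ≤ (⌈H₀⌉ : ℝ) := le_trans hq.1 (Int.le_ceil _)
    have h2 : |(q.2 : ℝ)| ≤ (⌈H₀⌉ : ℝ) := le_trans hq.2 (Int.le_ceil _)
    have h1' : |q.1| ≤ ⌈H₀⌉ := by
      have : ((|q.1| : ℤ) : ℝ) ≤ (⌈H₀⌉ : ℝ) := by push_cast; push_cast at h1; linarith
      exact_mod_cast this
    have h2' : |q.2| ≤ ⌈H₀⌉ := by
      have : ((|q.2| : ℤ) : ℝ) ≤ (⌈H₀⌉ : ℝ) := by push_cast; push_cast at h2; linarith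
      exact_mod_cast this
    exact ⟨Set.mem_Icc.mpr ⟨neg_le_of_abs_le h1', le_of_abs_le h1'⟩,
      Set.mem_Icc.mpr ⟨neg_le_of_abs_le h2', le_of_abs_le h2'⟩⟩
  obtain ⟨⟨x₀, y₀⟩, hqin, hqout⟩ := (hm'set.diff hfin).nonempty
  simp only [Set.mem_setOf_eq] at hqin hqout
  obtain ⟨hx₀ne, hy₀ne, hδpos, hδle⟩ := hqin
  set H : ℝ := max |(x₀ : ℝ)| |(y₀ : ℝ)| with hHdef
  set δ : ℝ := ‖(y₀ : ℚ_[p]) * ξ - (x₀ : ℚ_[p])‖ with hδdef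
  have hδ0 : (0 : ℝ) ≤ δ := norm_nonneg _
  have hH₀H : H₀ < H := not_le.mp hqout
  have hH9 : (9 : ℝ) ≤ H := le_of_lt (lt_of_le_of_lt (le_max_right _ _) hH₀H)
  have hH1 : (1 : ℝ) ≤ H := by linarith
  have hH0 : (0 : ℝ) < H := by linarith
  -- δ ≤ H ^ (-w)
  have hδ1 : δ ≤ H ^ (-w) :=
    le_trans hδle (Real.rpow_le_rpow_of_exponent_le hH1 (by linarith))
  have hδlt1 : δ < 1 :=
    lt_of_le_of_lt hδ1 (Real.rpow_lt_one_of_one_lt_of_neg (by linarith) (by linarith))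
  -- the scale X
  set t : ℝ := δ ^ (-(1/(m-1))) with htdef
  have ht0 : (0 : ℝ) < t := Real.rpow_pos_of_pos hδpos _
  set X : ℝ := 2 * t with hXdef
  have hX0 : (0 : ℝ) < X := by rw [hXdef]; linarith
  -- X ≥ X₀
  have htX₀ : X₀ ≤ t := by
    have e1 : (H ^ (-w)) ^ (-(1/(m-1))) ≤ t :=
      Real.rpow_le_rpow_of_nonpos hδpos hδ1 (neg_nonpos.mpr (by positivity))
    have e2 : (H ^ (-w)) ^ (-(1/(m-1))) = H ^ (w/(m-1)) := by
      rw [← Real.rpow_mul hH0.le]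
      congr 1
      ring
    have e3 : H ^ ((1:ℝ)/(m-1)) ≤ H ^ (w/(m-1)) :=
      Real.rpow_le_rpow_of_exponent_le hH1 (by gcongr)
    have e4 : X₀ ≤ H ^ ((1:ℝ)/(m-1)) := by
      have hXH : X₀ ^ (m-1) ≤ H := le_trans (le_max_left _ _) hH₀H.le
      have h5 := Real.rpow_le_rpow (by positivity) hXH (by positivity : (0:ℝ) ≤ 1/(m-1))
      rwa [← Real.rpow_mul hX₀0, show (m-1)*(1/(m-1)) = (1:ℝ) by field_simp,
        Real.rpow_one] at h5
    calc X₀ ≤ H ^ ((1:ℝ)/(m-1)) := e4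
      _ ≤ H ^ (w/(m-1)) := e3
      _ = (H ^ (-w)) ^ (-(1/(m-1))) := e2.symm
      _ ≤ t := e1
  have hXX₀ : X₀ ≤ X := by rw [hXdef]; linarith
  -- get a solution at scale X
  obtain ⟨x, y, hsq_pos, hsq_le, hnear⟩ := hX₀' X (le_trans (le_max_left _ _) hXX₀)
  have hxy_pos : (0:ℝ) < |(x : ℝ) * (y : ℝ)| := Real.sqrt_pos.mp hsq_pos
  have hxne : x ≠ 0 := by
    rintro rfl; simp at hxy_pos
  have hyne : y ≠ 0 := by
    rintro rfl; simp at hxy_pos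
  have hx1 : (1:ℝ) ≤ |(x : ℝ)| := one_le_abs_cast x hxne
  have hy1 : (1:ℝ) ≤ |(y : ℝ)| := one_le_abs_cast y hyne
  have hxyX2 : |(x:ℝ) * (y:ℝ)| ≤ X^2 := by
    have h := pow_le_pow_left₀ (Real.sqrt_nonneg _) hsq_le 2
    rwa [Real.sq_sqrt (abs_nonneg _)] at h
  have hxX2 : |(x:ℝ)| ≤ X^2 := by
    calc |(x:ℝ)| = |(x:ℝ)| * 1 := (mul_one _).symm
      _ ≤ |(x:ℝ)| * |(y:ℝ)| := by
          exact mul_le_mul_of_nonneg_left hy1 (abs_nonneg _)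
      _ = |(x:ℝ) * (y:ℝ)| := (abs_mul _ _).symm
      _ ≤ X^2 := hxyX2
  have hyX2 : |(y:ℝ)| ≤ X^2 := by
    calc |(y:ℝ)| = 1 * |(y:ℝ)| := (one_mul _).symm
      _ ≤ |(x:ℝ)| * |(y:ℝ)| := by
          exact mul_le_mul_of_nonneg_right hx1 (abs_nonneg _)
      _ = |(x:ℝ) * (y:ℝ)| := (abs_mul _ _).symm
      _ ≤ X^2 := hxyX2
  -- X ^ (-m) ≤ δ
  have hXm : X ^ (-m) ≤ δ := by
    have e1 : X ^ (-m) = 2 ^ (-m) * t ^ (-m) := by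
      rw [hXdef]; exact Real.mul_rpow (by norm_num) ht0.le
    have e2 : t ^ (-m) = δ ^ (m/(m-1)) := by
      rw [htdef, ← Real.rpow_mul hδ0]
      congr 1
      field_simp
    have e3 : δ ^ (m/(m-1)) ≤ δ ^ (1:ℝ) := by
      refine Real.rpow_le_rpow_of_exponent_ge hδpos hδlt1.le ?_
      rw [le_div_iff₀ hm1]; linarith
    have e4 : (2:ℝ) ^ (-m) ≤ 1 :=
      Real.rpow_le_one_of_one_le_of_nonpos (by norm_num) (by linarith)
    calc X ^ (-m) = 2 ^ (-m) * t ^ (-m) := e1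
      _ ≤ 1 * δ ^ (1:ℝ) := by
          refine mul_le_mul e4 (by rw [e2]; exact e3) (by positivity) (by norm_num)
      _ = δ := by rw [one_mul, Real.rpow_one]
  -- the "proportional" contradiction
  have key : ∀ z u : ℤ, z ≠ 0 → |(z:ℝ)| ≤ X →
      (z:ℚ_[p]) * ((y₀:ℚ_[p]) * ξ - (x₀:ℚ_[p])) = (u:ℚ_[p]) * ((y:ℚ_[p]) * ξ - (x:ℚ_[p])) →
      False := by
    intro z u hz hzX heq
    have h1 : ‖(z:ℚ_[p])‖ * δ ≤ X ^ (-m) := by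
      calc ‖(z:ℚ_[p])‖ * δ = ‖(z:ℚ_[p]) * ((y₀:ℚ_[p]) * ξ - (x₀:ℚ_[p]))‖ := by
            rw [hδdef, ← norm_mul]
        _ = ‖(u:ℚ_[p]) * ((y:ℚ_[p]) * ξ - (x:ℚ_[p]))‖ := by rw [heq]
        _ = ‖(u:ℚ_[p])‖ * ‖(y:ℚ_[p]) * ξ - (x:ℚ_[p])‖ := norm_mul _ _
        _ ≤ 1 * (X ^ (-m)) :=
            mul_le_mul (Padic.norm_int_le_one u) hnear (norm_nonneg _) zero_le_one
        _ = X ^ (-m) := one_mul _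
    have h4 : (0:ℝ) < |(z:ℝ)| := lt_of_lt_of_le one_pos (one_le_abs_cast z hz)
    have h5 : (1:ℝ) ≤ ‖(z:ℚ_[p])‖ * X :=
      le_trans (one_le_norm_mul_abs p z hz)
        (mul_le_mul_of_nonneg_left hzX (norm_nonneg _))
    have h2 : X⁻¹ * δ ≤ ‖(z:ℚ_[p])‖ * δ := by
      refine mul_le_mul_of_nonneg_right ?_ hδ0
      rw [inv_eq_one_div, div_le_iff₀ hX0]
      linarith
    have h6 : δ ≤ X * X ^ (-m) := by
      have h7 := le_trans h2 h1
      calc δ = X * (X⁻¹ * δ) := by field_simp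
        _ ≤ X * X ^ (-m) := mul_le_mul_of_nonneg_left h7 hX0.le
    have h7 : X * X ^ (-m) = 2 ^ (1-m) * δ := by
      have e1 : X * X ^ (-m) = X ^ (1-m) := by
        rw [show (1-m : ℝ) = 1 + (-m) by ring, Real.rpow_add hX0, Real.rpow_one]
      rw [e1, hXdef, Real.mul_rpow (by norm_num) ht0.le]
      congr 1
      rw [htdef, ← Real.rpow_mul hδ0, show (-(1/(m-1)))*(1-m) = (1:ℝ) by field_simp; ring,
        Real.rpow_one]
    have h8 : (2:ℝ) ^ (1-m) < 1 :=
      Real.rpow_lt_one_of_one_lt_of_neg one_lt_two (by linarith)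
    nlinarith [hδpos, h6, h7.le, h7.ge, h8]
  by_cases hD : x * y₀ - x₀ * y = 0
  · -- proportional case
    have hxy0 : (x:ℚ_[p]) * (y₀:ℚ_[p]) = (x₀:ℚ_[p]) * (y:ℚ_[p]) := by
      have h : x * y₀ = x₀ * y := by omega
      exact_mod_cast congrArg (fun n : ℤ => (n : ℚ_[p])) h
    rcases le_total |(x:ℝ)| |(y:ℝ)| with hmin | hmin
    · have hxX : |(x:ℝ)| ≤ X := by
        have h1 : |(x:ℝ)| ≤ Real.sqrt |(x:ℝ) * (y:ℝ)| := by
          have h2 : |(x:ℝ)| * |(x:ℝ)| ≤ |(x:ℝ)| * |(y:ℝ)| :=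
            mul_le_mul_of_nonneg_left hmin (abs_nonneg _)
          calc |(x:ℝ)| = Real.sqrt (|(x:ℝ)| * |(x:ℝ)|) :=
                (Real.sqrt_mul_self (abs_nonneg _)).symm
            _ ≤ Real.sqrt (|(x:ℝ)| * |(y:ℝ)|) := Real.sqrt_le_sqrt h2
            _ = Real.sqrt |(x:ℝ) * (y:ℝ)| := by rw [abs_mul]
        exact le_trans h1 hsq_le
      refine key x x₀ hxne hxX ?_
      calc (x:ℚ_[p]) * ((y₀:ℚ_[p]) * ξ - (x₀:ℚ_[p]))
          = (x:ℚ_[p]) * (y₀:ℚ_[p]) * ξ - (x₀:ℚ_[p]) * (x:ℚ_[p]) := by ring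
        _ = (x₀:ℚ_[p]) * (y:ℚ_[p]) * ξ - (x₀:ℚ_[p]) * (x:ℚ_[p]) := by rw [hxy0]
        _ = (x₀:ℚ_[p]) * ((y:ℚ_[p]) * ξ - (x:ℚ_[p])) := by ring
    · have hyX : |(y:ℝ)| ≤ X := by
        have h1 : |(y:ℝ)| ≤ Real.sqrt |(x:ℝ) * (y:ℝ)| := by
          have h2 : |(y:ℝ)| * |(y:ℝ)| ≤ |(x:ℝ)| * |(y:ℝ)| :=
            mul_le_mul_of_nonneg_right hmin (abs_nonneg _)
          calc |(y:ℝ)| = Real.sqrt (|(y:ℝ)| * |(y:ℝ)|) :=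
                (Real.sqrt_mul_self (abs_nonneg _)).symm
            _ ≤ Real.sqrt (|(x:ℝ)| * |(y:ℝ)|) := Real.sqrt_le_sqrt h2
            _ = Real.sqrt |(x:ℝ) * (y:ℝ)| := by rw [abs_mul]
        exact le_trans h1 hsq_le
      refine key y y₀ hyne hyX ?_
      calc (y:ℚ_[p]) * ((y₀:ℚ_[p]) * ξ - (x₀:ℚ_[p]))
          = (y₀:ℚ_[p]) * (y:ℚ_[p]) * ξ - (x₀:ℚ_[p]) * (y:ℚ_[p]) := by ring
        _ = (y₀:ℚ_[p]) * (y:ℚ_[p]) * ξ - (x:ℚ_[p]) * (y₀:ℚ_[p]) := by rw [hxy0]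
        _ = (y₀:ℚ_[p]) * ((y:ℚ_[p]) * ξ - (x:ℚ_[p])) := by ring
  · -- transversal case
    set D : ℤ := x * y₀ - x₀ * y with hDdef
    have hDnorm : ‖(D:ℚ_[p])‖ ≤ δ := by
      have hid : (D:ℚ_[p]) =
          (y:ℚ_[p]) * ((y₀:ℚ_[p]) * ξ - (x₀:ℚ_[p])) +
          -((y₀:ℚ_[p]) * ((y:ℚ_[p]) * ξ - (x:ℚ_[p]))) := by
        rw [hDdef]; push_cast; ring
      rw [hid]
      refine le_trans (Padic.nonarchimedean _ _) (max_le ?_ ?_)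
      · rw [norm_mul]
        calc ‖(y:ℚ_[p])‖ * δ ≤ 1 * δ :=
              mul_le_mul_of_nonneg_right (Padic.norm_int_le_one y) hδ0
          _ = δ := one_mul _
      · rw [norm_neg, norm_mul]
        calc ‖(y₀:ℚ_[p])‖ * ‖(y:ℚ_[p]) * ξ - (x:ℚ_[p])‖ ≤ 1 * (X ^ (-m)) :=
              mul_le_mul (Padic.norm_int_le_one y₀) hnear (norm_nonneg _) zero_le_one
          _ = X ^ (-m) := one_mul _
          _ ≤ δ := hXm
    have hDabs : |(D:ℝ)| ≤ 2 * X^2 * H := by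
      have hcast : ((D:ℤ):ℝ) = (x:ℝ) * (y₀:ℝ) - (x₀:ℝ) * (y:ℝ) := by
        rw [hDdef]; push_cast; ring
      rw [hcast]
      have b1 : |(x:ℝ) * (y₀:ℝ)| ≤ X^2 * H := by
        rw [abs_mul]
        exact mul_le_mul hxX2 (le_max_right _ _) (abs_nonneg _) (by positivity)
      have b2 : |(x₀:ℝ) * (y:ℝ)| ≤ H * X^2 := by
        rw [abs_mul]
        exact mul_le_mul (le_max_left _ _) hyX2 (abs_nonneg _) hH0.le
      calc |(x:ℝ) * (y₀:ℝ) - (x₀:ℝ) * (y:ℝ)|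
          ≤ |(x:ℝ) * (y₀:ℝ)| + |(x₀:ℝ) * (y:ℝ)| := abs_sub _ _
        _ ≤ X^2 * H + H * X^2 := add_le_add b1 b2
        _ = 2 * X^2 * H := by ring
    have hDℝ : (0:ℝ) ≤ 2 * X^2 * H := by positivity
    have hcontra : (1:ℝ) ≤ δ * (2 * X^2 * H) :=
      le_trans (one_le_norm_mul_abs p D hD)
        (mul_le_mul hDnorm hDabs (abs_nonneg _) hδ0)
    -- bound δ * X^2
    have ht2 : t^2 = δ ^ (-(2/(m-1))) := by
      have e : t^2 = t ^ (2:ℝ) := by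
        rw [← Real.rpow_natCast t 2]; norm_num
      rw [e, htdef, ← Real.rpow_mul hδ0]
      congr 1
      ring
    have hδX2 : δ * X^2 = 4 * δ ^ ((m-3)/(m-1)) := by
      have e : δ * t^2 = δ ^ ((m-3)/(m-1)) := by
        rw [ht2]
        rw [show δ * δ ^ (-(2/(m-1))) = δ ^ (1:ℝ) * δ ^ (-(2/(m-1))) by rw [Real.rpow_one]]
        rw [← Real.rpow_add hδpos]
        congr 1
        field_simp
        ring
      calc δ * X^2 = 4 * (δ * t^2) := by rw [hXdef]; ring
        _ = 4 * δ ^ ((m-3)/(m-1)) := by rw [e]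
    have hδe : δ ^ ((m-3)/(m-1)) ≤ H ^ (-(w * ((m-3)/(m-1)))) := by
      have e0 : (0:ℝ) ≤ (m-3)/(m-1) := by positivity
      calc δ ^ ((m-3)/(m-1)) ≤ (H ^ (-w)) ^ ((m-3)/(m-1)) :=
            Real.rpow_le_rpow hδ0 hδ1 e0
        _ = H ^ (-(w * ((m-3)/(m-1)))) := by
            rw [← Real.rpow_mul hH0.le]; congr 1; ring
    have hHe : H ^ (-(w * ((m-3)/(m-1)))) ≤ H ^ ((-2:ℝ)) :=
      Real.rpow_le_rpow_of_exponent_le hH1 (by linarith)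
    have hH2 : H ^ ((-2:ℝ)) = (H^2)⁻¹ := by
      rw [show ((-2:ℝ)) = -(2:ℝ) by norm_num, Real.rpow_neg hH0.le,
        show (2:ℝ) = ((2:ℕ):ℝ) by norm_num, Real.rpow_natCast]
    have hfinal : (1:ℝ) ≤ 8 / H := by
      have c2 : (1:ℝ) ≤ 8 * δ ^ ((m-3)/(m-1)) * H := by
        calc (1:ℝ) ≤ δ * (2 * X^2 * H) := hcontra
          _ = 2 * (δ * X^2) * H := by ring
          _ = 8 * δ ^ ((m-3)/(m-1)) * H := by rw [hδX2]; ring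
      have c3 : 8 * δ ^ ((m-3)/(m-1)) * H ≤ 8 * (H^2)⁻¹ * H := by
        have : δ ^ ((m-3)/(m-1)) ≤ (H^2)⁻¹ := by
          rw [← hH2]; exact le_trans hδe hHe
        refine mul_le_mul_of_nonneg_right ?_ hH0.le
        linarith
      have c4 : 8 * (H^2)⁻¹ * H = 8 / H := by
        field_simp
      linarith
    have : (1:ℝ) * H ≤ 8 := (le_div_iff₀ hH0).mp hfinal
    linarith
end

section
/- Let ξ ∈ ℚ_p be irrational and let ((x_k×, y_k×))_{k≥1} be a sequence of multiplicative best approximations to ξ. Assume that at least one of the following holds: (i) there exists c > 0 such that for infinitely many k one has |x_k×| ≥ c·|y_k×| and |x_{k+1}×| ≥ c·|y_{k+1}×|; (ii) there exists c > 0 such that for infinitely many k one has |x_k×| ≤ c·|y_k×| and |x_{k+1}×| ≤ c·|y_{k+1}×|. Then μ̂×(ξ) ≤ 3. -/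
open Filter MeasureTheory
open scoped ENNReal

lemma le_of_sq_le_sq'' {a b : ℝ} (hb : 0 ≤ b) (h : a ^ 2 ≤ b ^ 2) : a ≤ b := by
  nlinarith [sq_nonneg (a - b), sq_nonneg (a + b)]

lemma one_le_of_sq_eq {q ab : ℝ} (h0 : 0 ≤ q) (hq : q ^ 2 = ab) (h1 : 1 ≤ ab) : 1 ≤ q := by
  nlinarith

lemma one_le_mul_one_le {a b : ℝ} (ha : 1 ≤ a) (hb : 1 ≤ b) : 1 ≤ a * b := by nlinarith

lemma ne_sq_half {N Qq : ℝ} (h0 : 0 ≤ N) (h2 : N ≤ Qq / 2) (h3 : 1 ≤ Qq) :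
    N ^ 2 ≠ Qq ^ 2 := by nlinarith

lemma ne_sq_lt {q Qq : ℝ} (h1 : 0 ≤ q) (h : q < Qq) : q ^ 2 ≠ Qq ^ 2 := by nlinarith

lemma eq_of_sq_eq {a b : ℝ} (ha : 0 ≤ a) (hb : 0 ≤ b) (h : a ^ 2 = b ^ 2) : a = b :=
  le_antisymm (le_of_sq_le_sq'' hb h.le) (le_of_sq_le_sq'' ha h.ge)

lemma big_helper {pm sc G : ℝ} (hpm : 0 < pm) (hsc : 0 < sc)
    (h : pm * (1 + sc + sc⁻¹) < G) : pm < G * sc ∧ pm < G := by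
  have hsi : 0 < sc⁻¹ := by positivity
  constructor
  · have h2 := mul_lt_mul_of_pos_right h hsc
    have e : pm * (1 + sc + sc⁻¹) * sc = pm * sc + pm * sc ^ 2 + pm * (sc⁻¹ * sc) := by ring
    rw [inv_mul_cancel₀ hsc.ne'] at e
    nlinarith [mul_pos hpm hsc, mul_pos (mul_pos hpm hsc) hsc]
  · nlinarith [mul_pos hpm hsc, mul_pos hpm hsi]

lemma bal_sc1 {c A B q : ℝ} (hc : 0 < c) (hB0 : 0 ≤ B) (hq0 : 0 ≤ q)
    (hq2 : q ^ 2 = A * B) (hb : c * B ≤ A) : Real.sqrt c * B ≤ q := by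
  apply le_of_sq_le_sq'' hq0
  rw [mul_pow, Real.sq_sqrt hc.le, hq2]
  nlinarith [mul_le_mul_of_nonneg_right hb hB0]

lemma bal_sc2 {c A B q : ℝ} (hc : 0 < c) (hA0 : 0 ≤ A) (hq0 : 0 ≤ q)
    (hq2 : q ^ 2 = A * B) (hb : A ≤ c * B) : (Real.sqrt c)⁻¹ * A ≤ q := by
  apply le_of_sq_le_sq'' hq0
  have hsq : Real.sqrt c ^ 2 = c := Real.sq_sqrt hc.le
  have h1 : A * A ≤ c * (A * B) := by nlinarith [mul_le_mul_of_nonneg_right hb hA0]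
  have e : ((Real.sqrt c)⁻¹ * A) ^ 2 * c = A * A := by
    rw [mul_pow, inv_pow, hsq]
    field_simp
  have h2 : ((Real.sqrt c)⁻¹ * A) ^ 2 * c ≤ q ^ 2 * c := by
    rw [e, hq2]; nlinarith
  exact le_of_mul_le_mul_right h2 hc

lemma mul_step {εw nd d r : ℝ} (hεw0 : 0 ≤ εw) (hdlb : 1 ≤ nd * d)
    (hfact : r = nd * εw) : εw ≤ d * r := by
  have h2' : εw * 1 ≤ εw * (nd * d) := mul_le_mul_of_nonneg_left hdlb hεw0
  rw [mul_one] at h2'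
  have e : εw * (nd * d) = d * (nd * εw) := by ring
  rw [hfact]; linarith [e ▸ h2']


section AuxPadic
variable {p : ℕ} [Fact p.Prime]

/-- product formula bound: for a nonzero integer, `1 ≤ ‖k‖_p * |k|`. -/
lemma padic_int_norm_lb : ∀ n : ℕ, ∀ k : ℤ, k.natAbs ≤ n → k ≠ 0 →
    1 ≤ ‖(k : ℚ_[p])‖ * |(k : ℝ)| := by
  intro n
  induction n with
  | zero =>
    intro k hkn hk
    exact absurd (Int.natAbs_eq_zero.mp (Nat.le_zero.mp hkn)) hk
  | succ n ih =>
    intro k hkn hk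
    by_cases hdvd : (p : ℤ) ∣ k
    · obtain ⟨k', rfl⟩ := hdvd
      have hp2 : 2 ≤ p := (Fact.out : p.Prime).two_le
      have hk' : k' ≠ 0 := by rintro rfl; simp at hk
      have h1 : 1 ≤ k'.natAbs := Int.natAbs_pos.mpr hk'
      have hmul : ((p : ℤ) * k').natAbs = p * k'.natAbs := by
        rw [Int.natAbs_mul, Int.natAbs_natCast]
      rw [hmul] at hkn
      have hlt : k'.natAbs ≤ n := by nlinarith [hkn, h1, hp2]
      have IH := ih k' hlt hk'
      have hcast : (((p : ℤ) * k' : ℤ) : ℚ_[p]) = (p : ℚ_[p]) * (k' : ℚ_[p]) := by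
        push_cast; ring
      have hnorm : ‖(((p : ℤ) * k' : ℤ) : ℚ_[p])‖ = (p : ℝ)⁻¹ * ‖(k' : ℚ_[p])‖ := by
        rw [hcast, norm_mul, Padic.norm_p]
      have habs : |(((p : ℤ) * k' : ℤ) : ℝ)| = (p : ℝ) * |(k' : ℝ)| := by
        push_cast [abs_mul]
        rw [abs_of_nonneg (by positivity : (0:ℝ) ≤ (p:ℝ))]
      have hppos : (0 : ℝ) < p := by positivity
      rw [hnorm, habs]
      calc (1:ℝ) ≤ ‖(k' : ℚ_[p])‖ * |(k' : ℝ)| := IH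
        _ = (p : ℝ)⁻¹ * ‖(k' : ℚ_[p])‖ * ((p : ℝ) * |(k' : ℝ)|) := by
            field_simp
    · have h1 : (1 : ℝ) ≤ ‖(k : ℚ_[p])‖ := by
        by_contra h
        push_neg at h
        exact hdvd ((Padic.norm_intCast_lt_one_iff (k := k)).mp h)
      have h2 : (1 : ℝ) ≤ |(k : ℝ)| := by exact_mod_cast Int.one_le_abs hk
      nlinarith

lemma padic_int_norm_lb' (k : ℤ) (hk : k ≠ 0) : 1 ≤ ‖(k : ℚ_[p])‖ * |(k : ℝ)| :=
  padic_int_norm_lb k.natAbs k le_rfl hk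

/-- nonarchimedean determinant bound -/
lemma padic_det_norm_le (ξ : ℚ_[p]) (a₁ b₁ a₂ b₂ : ℤ) :
    ‖((a₁ * b₂ - a₂ * b₁ : ℤ) : ℚ_[p])‖ ≤
      max ‖(b₁ : ℚ_[p]) * ξ - (a₁ : ℚ_[p])‖ ‖(b₂ : ℚ_[p]) * ξ - (a₂ : ℚ_[p])‖ := by
  have hid : ((a₁ * b₂ - a₂ * b₁ : ℤ) : ℚ_[p])
      = (b₁ : ℚ_[p]) * ((b₂ : ℚ_[p]) * ξ - (a₂ : ℚ_[p]))
        + (-(b₂ : ℚ_[p])) * ((b₁ : ℚ_[p]) * ξ - (a₁ : ℚ_[p])) := by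
    push_cast; ring
  rw [hid]
  refine le_trans (Padic.nonarchimedean _ _) (max_le ?_ ?_)
  · rw [norm_mul]
    refine le_trans (mul_le_mul_of_nonneg_right (Padic.norm_int_le_one b₁)
      (norm_nonneg _)) ?_
    rw [one_mul]
    exact le_max_right _ _
  · rw [norm_mul, norm_neg]
    refine le_trans (mul_le_mul_of_nonneg_right (Padic.norm_int_le_one b₂)
      (norm_nonneg _)) ?_
    rw [one_mul]
    exact le_max_left _ _

/-- coprime pairs with vanishing determinant agree up to sign (absolute values). -/
lemma det_zero_abs_eq {a₁ b₁ a₂ b₂ : ℤ} (h₁ : IsCoprime a₁ b₁) (h₂ : IsCoprime a₂ b₂)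
    (h : a₁ * b₂ - a₂ * b₁ = 0) : |a₁| = |a₂| ∧ |b₁| = |b₂| := by
  have heq : a₁ * b₂ = a₂ * b₁ := by linarith
  have d1 : a₁ ∣ a₂ := h₁.dvd_of_dvd_mul_right ⟨b₂, heq.symm⟩
  have d2 : a₂ ∣ a₁ := h₂.dvd_of_dvd_mul_right ⟨b₁, heq⟩
  have d3 : b₁ ∣ b₂ := h₁.symm.dvd_of_dvd_mul_right ⟨a₂, by linarith [heq]⟩
  have d4 : b₂ ∣ b₁ := h₂.symm.dvd_of_dvd_mul_right ⟨a₁, by linarith [heq]⟩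
  constructor
  · exact Int.dvd_antisymm (abs_nonneg _) (abs_nonneg _)
      ((abs_dvd _ _).mpr ((dvd_abs _ _).mpr d1)) ((abs_dvd _ _).mpr ((dvd_abs _ _).mpr d2))
  · exact Int.dvd_antisymm (abs_nonneg _) (abs_nonneg _)
      ((abs_dvd _ _).mpr ((dvd_abs _ _).mpr d3)) ((abs_dvd _ _).mpr ((dvd_abs _ _).mpr d4))

/-- from `1 ≤ ‖Δ‖ * |Δ|`, `‖Δ‖ ≤ εw` and `N * εw * P ≤ 1` conclude `N * P ≤ |Δ|`. -/
lemma np_le_abs_det (Δ : ℤ) (hΔ : Δ ≠ 0) {εw N P : ℝ}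
    (hnorm : ‖(Δ : ℚ_[p])‖ ≤ εw) (hN : 0 ≤ N) (hP : 0 ≤ P)
    (hNP1 : N * εw * P ≤ 1) : N * P ≤ |(Δ : ℝ)| := by
  have h1 := padic_int_norm_lb' (p := p) Δ hΔ
  have h2 : 1 ≤ εw * |(Δ : ℝ)| := by
    nlinarith [abs_nonneg ((Δ : ℝ)), norm_nonneg ((Δ : ℚ_[p]))]
  have hεw : 0 ≤ εw := le_trans (norm_nonneg _) hnorm
  nlinarith [mul_nonneg hN hP, abs_nonneg ((Δ : ℝ)),
    mul_le_mul_of_nonneg_left h2 (mul_nonneg hN hP),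
    mul_le_mul_of_nonneg_right hNP1 (abs_nonneg ((Δ : ℝ)))]

end AuxPadic




private lemma core5a (N B sc qq Qq P s : ℝ) (hN0 : 0 < N) (hsc : 0 ≤ sc) (hB0 : 0 ≤ B)
    (hs : s ≤ N ^ 2) (hc : N * P ≤ 2 * (s * B)) (hscB : sc * B ≤ qq) (hNX : 2 * N ≤ Qq)
    (hqQ : qq ≤ Qq) (hq0 : 0 ≤ qq) (hQ0 : 0 ≤ Qq) : sc * P ≤ 2 * Qq ^ 2 := by
  have h1 : s * B ≤ N ^ 2 * B := mul_le_mul_of_nonneg_right hs hB0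
  have h2 : N * P ≤ N * (2 * (N * B)) := by nlinarith
  have h3 : P ≤ 2 * (N * B) := le_of_mul_le_mul_left h2 hN0
  have h4 : sc * P ≤ sc * (2 * (N * B)) := mul_le_mul_of_nonneg_left h3 hsc
  have h5 : sc * (2 * (N * B)) = 2 * (N * (sc * B)) := by ring
  have h6 : N * (sc * B) ≤ N * qq := mul_le_mul_of_nonneg_left hscB hN0.le
  have h8 : (2 * N) * qq ≤ Qq * qq := mul_le_mul_of_nonneg_right hNX hq0
  have h9 : Qq * qq ≤ Qq * Qq := mul_le_mul_of_nonneg_left hqQ hQ0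
  nlinarith

private lemma core5b (N A t P : ℝ) (hN0 : 0 < N) (hA0 : 0 ≤ A) (ht : t ≤ N ^ 2)
    (hc : N * P ≤ 2 * (A * t)) : P ≤ 2 * A * N := by
  have h1 : A * t ≤ A * N ^ 2 := mul_le_mul_of_nonneg_left ht hA0
  have h2 : N * P ≤ N * (2 * A * N) := by nlinarith
  exact le_of_mul_le_mul_left h2 hN0

private lemma core7 (N P u v w r ρ Qq : ℝ) (hN0 : 0 < N) (hP0 : 0 ≤ P)
    (hu0 : 0 ≤ u) (hw0 : 0 ≤ w)
    (hprod : w * v = r ^ 2) (hu : u ≤ ρ ^ 2) (hr : r ≤ Qq) (hρ : ρ ≤ Qq)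
    (hr0 : 0 ≤ r) (hρ0 : 0 ≤ ρ) (hQ0 : 0 ≤ Qq)
    (hc : N * P ≤ 2 * (u * v)) (hh : P ≤ 2 * w * N) : P ≤ 2 * Qq ^ 2 := by
  have huv0 : 0 ≤ 2 * (u * v) := le_trans (by positivity) hc
  have h1 : (N * P) * P ≤ (2 * (u * v)) * (2 * w * N) := mul_le_mul hc hh hP0 huv0
  have e : (2 * (u * v)) * (2 * w * N) = N * (4 * u * (w * v)) := by ring
  rw [e, hprod] at h1
  have h1' : N * (P * P) ≤ N * (4 * u * r ^ 2) := by nlinarith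
  have h2 : P * P ≤ 4 * u * r ^ 2 := le_of_mul_le_mul_left h1' hN0
  have h3 : 4 * u * r ^ 2 ≤ 4 * ρ ^ 2 * r ^ 2 :=
    mul_le_mul_of_nonneg_right (by nlinarith) (by positivity)
  have h4 : ρ ^ 2 ≤ Qq ^ 2 := by nlinarith
  have h5 : r ^ 2 ≤ Qq ^ 2 := by nlinarith
  have h6 : P * P ≤ (2 * Qq ^ 2) * (2 * Qq ^ 2) := by nlinarith
  nlinarith [sq_nonneg (P + 2 * Qq ^ 2), hP0, sq_nonneg Qq]

private lemma coreDeg (q Qq A B A' B' sc P : ℝ) (hq0 : 0 < q) (hsc : 0 ≤ sc)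
    (hB0 : 0 ≤ B) (hB'0 : 0 ≤ B')
    (hAq : A ≤ q ^ 2) (hA'Q : A' ≤ Qq ^ 2) (hscB : sc * B ≤ q) (hscB' : sc * B' ≤ Qq)
    (hqQ : q ≤ Qq) (hQ0 : 0 ≤ Qq) (hd : q * P ≤ A * B' + A' * B) : sc * P ≤ 2 * Qq ^ 2 := by
  have h1 : sc * (q * P) ≤ sc * (A * B') + sc * (A' * B) := by
    have := mul_le_mul_of_nonneg_left hd hsc
    nlinarith
  have h3 : A * (sc * B') ≤ q ^ 2 * Qq :=
    mul_le_mul hAq hscB' (mul_nonneg hsc hB'0) (by positivity)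
  have h5 : A' * (sc * B) ≤ Qq ^ 2 * q :=
    mul_le_mul hA'Q hscB (mul_nonneg hsc hB0) (by positivity)
  have h6 : q ^ 2 * Qq ≤ q * Qq ^ 2 := by
    nlinarith [mul_le_mul_of_nonneg_right hqQ (mul_nonneg hq0.le hQ0)]
  have h8 : q * (sc * P) ≤ q * (2 * Qq ^ 2) := by nlinarith
  exact le_of_mul_le_mul_left h8 hq0

/-- Core real-arithmetic contradiction. -/
lemma core_real (q Qq A B A' B' s t N P sc pm G : ℝ)
    (hq1 : 1 ≤ q) (hqQ : q ≤ Qq)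
    (hB : 1 ≤ B) (hB' : 1 ≤ B')
    (hs : 1 ≤ s) (ht : 1 ≤ t) (hN : 1 ≤ N)
    (hA0 : 0 < A) (hA'0 : 0 < A')
    (hABq : A * B = q ^ 2) (hABQ : A' * B' = Qq ^ 2) (hst : s * t = N ^ 2)
    (hNX : 2 * N ≤ Qq)
    (hsc : 0 < sc) (hscB : sc * B ≤ q) (hscB' : sc * B' ≤ Qq)
    (hpm : 0 < pm) (hP : 0 < P) (hG : 0 < G)
    (hPeq : pm * P = 2 * G * Qq ^ 2)
    (hG1 : pm < G * sc) (hG2 : pm < G)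
    (d7 : N * P ≤ A * B' + A' * B) (d6 : N * P ≤ s * B' + A' * t)
    (d5 : N * P ≤ s * B + A * t ∨ (s = A ∧ t = B ∧ N = q)) : False := by
  have hQ1 : 1 ≤ Qq := le_trans hq1 hqQ
  have hQ0 : 0 < Qq := by linarith
  have hq0 : 0 < q := by linarith
  have hN0 : 0 < N := by linarith
  have hs0 : 0 < s := by linarith
  have ht0 : 0 < t := by linarith
  have hB0 : 0 < B := by linarith
  have hB'0 : 0 < B' := by linarith
  have hQsq : (0:ℝ) < 2 * Qq ^ 2 := by positivity
  have hAq : A ≤ q ^ 2 := by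
    have h := mul_le_mul_of_nonneg_left hB hA0.le
    rw [mul_one, hABq] at h; exact h
  have hA'Q : A' ≤ Qq ^ 2 := by
    have h := mul_le_mul_of_nonneg_left hB' hA'0.le
    rw [mul_one, hABQ] at h; exact h
  have hsN : s ≤ N ^ 2 := by
    have h := mul_le_mul_of_nonneg_left ht hs0.le
    rw [mul_one, hst] at h; exact h
  have htN : t ≤ N ^ 2 := by
    have h := mul_le_mul_of_nonneg_left hs ht0.le
    rw [mul_one] at h
    have e : t * s = N ^ 2 := by rw [mul_comm]; exact hst
    rw [e] at h; exact h
  clear hst hs ht hB hB'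
  -- two key impossibilities
  have hkey1 : ¬ (sc * P ≤ 2 * Qq ^ 2) := by
    intro h
    have e1 : pm * (sc * P) ≤ pm * (2 * Qq ^ 2) := mul_le_mul_of_nonneg_left h hpm.le
    have e2 : pm * (sc * P) = sc * (pm * P) := by ring
    rw [e2, hPeq] at e1
    have e3 : (G * sc) * (2 * Qq ^ 2) ≤ pm * (2 * Qq ^ 2) := by
      have e : sc * (2 * G * Qq ^ 2) = (G * sc) * (2 * Qq ^ 2) := by ring
      linarith
    have e4 : G * sc ≤ pm := le_of_mul_le_mul_right e3 hQsq
    linarith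
  have hkey2 : ¬ (P ≤ 2 * Qq ^ 2) := by
    intro h
    have e1 : pm * P ≤ pm * (2 * Qq ^ 2) := mul_le_mul_of_nonneg_left h hpm.le
    rw [hPeq] at e1
    have e3 : G * (2 * Qq ^ 2) ≤ pm * (2 * Qq ^ 2) := by
      have e : 2 * G * Qq ^ 2 = G * (2 * Qq ^ 2) := by ring
      linarith
    have e4 : G ≤ pm := le_of_mul_le_mul_right e3 hQsq
    linarith
  rcases d5 with d5 | ⟨hsA, htB, hNq⟩
  · -- generic case
    have c5 : N * P ≤ 2 * (s * B) ∨ N * P ≤ 2 * (A * t) := by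
      rcases le_total (s * B) (A * t) with h | h
      · exact Or.inr (by linarith)
      · exact Or.inl (by linarith)
    rcases c5 with c5 | c5
    · exact hkey1 (core5a N B sc q Qq P s hN0 hsc.le hB0.le hsN c5 hscB hNX hqQ hq0.le hQ0.le)
    · have h5b : P ≤ 2 * A * N := core5b N A t P hN0 hA0.le htN c5
      have c6 : N * P ≤ 2 * (s * B') ∨ N * P ≤ 2 * (A' * t) := by
        rcases le_total (s * B') (A' * t) with h | h
        · exact Or.inr (by linarith)
        · exact Or.inl (by linarith)
      rcases c6 with c6 | c6
      · exact hkey1 (core5a N B' sc Qq Qq P s hN0 hsc.le hB'0.le hsN c6 hscB' hNX le_rfl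
          hQ0.le hQ0.le)
      · have h6b : P ≤ 2 * A' * N := core5b N A' t P hN0 hA'0.le htN c6
        have c7 : N * P ≤ 2 * (A * B') ∨ N * P ≤ 2 * (A' * B) := by
          rcases le_total (A * B') (A' * B) with h | h
          · exact Or.inr (by linarith)
          · exact Or.inl (by linarith)
        rcases c7 with c7 | c7
        · exact hkey2 (core7 N P A B' A' Qq q Qq hN0 hP.le hA0.le hA'0.le hABQ hAq le_rfl
            hqQ hQ0.le hq0.le hQ0.le c7 h6b)
        · exact hkey2 (core7 N P A' B A q Qq Qq hN0 hP.le hA'0.le hA0.le hABq hA'Q hqQ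
            le_rfl hq0.le hQ0.le hQ0.le c7 h5b)
  · -- degenerate case : solution is ±(x_K, y_K)
    rw [hsA, htB, hNq] at d6
    exact hkey1 (coreDeg q Qq A B A' B' sc P hq0 hsc.le hB0.le hB'0.le hAq hA'Q hscB hscB'
      hqQ hQ0.le d6)

section KeyLemma
variable {p : ℕ} [Fact p.Prime]

lemma key (ξ : ℚ_[p])
    (x y : ℕ → ℤ) (Q : ℕ → ℝ)
    (hQ : ∀ k, Q k = Real.sqrt |(x k : ℝ) * (y k : ℝ)|)
    (hcop : ∀ k, IsCoprime (x k) (y k))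
    (hne : ∀ k, x k ≠ 0 ∧ y k ≠ 0)
    (hmono : StrictMono Q)
    (hdec : StrictAnti fun k => ‖(y k : ℚ_[p]) * ξ - (x k : ℚ_[p])‖)
    (hbest : ∀ k, ∀ a b : ℤ, IsCoprime a b → a ≠ 0 → b ≠ 0 →
      Real.sqrt |(a : ℝ) * (b : ℝ)| < Q (k + 1) →
      ‖(y k : ℚ_[p]) * ξ - (x k : ℚ_[p])‖ ≤ ‖(b : ℚ_[p]) * ξ - (a : ℚ_[p])‖)
    (m : ℝ) (hm3 : 3 < m)
    (c : ℝ) (hc : 0 < c) (K : ℕ)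
    (hbal : (c * |(y K : ℝ)| ≤ |(x K : ℝ)| ∧ c * |(y (K+1) : ℝ)| ≤ |(x (K+1) : ℝ)|) ∨
            (|(x K : ℝ)| ≤ c * |(y K : ℝ)| ∧ |(x (K+1) : ℝ)| ≤ c * |(y (K+1) : ℝ)|))
    (hbig : (2:ℝ) ^ m * (1 + Real.sqrt c + (Real.sqrt c)⁻¹) < (Q (K+1)) ^ (m - 3))
    (hsol : ∃ a b : ℤ, 0 < Real.sqrt |(a : ℝ) * (b : ℝ)| ∧
      Real.sqrt |(a : ℝ) * (b : ℝ)| ≤ Q (K+1) / 2 ∧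
      ‖(b : ℚ_[p]) * ξ - (a : ℚ_[p])‖ ≤ (Q (K+1) / 2) ^ (-m)) : False := by
  obtain ⟨x₁, y₁, hpos, hle, herr⟩ := hsol
  set A : ℝ := |(x K : ℝ)| with hA_def
  set B : ℝ := |(y K : ℝ)| with hB_def
  set A' : ℝ := |(x (K+1) : ℝ)| with hA'_def
  set B' : ℝ := |(y (K+1) : ℝ)| with hB'_def
  set εK : ℝ := ‖(y K : ℚ_[p]) * ξ - (x K : ℚ_[p])‖ with hεK_def
  set εK1 : ℝ := ‖(y (K+1) : ℚ_[p]) * ξ - (x (K+1) : ℚ_[p])‖ with hεK1_def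
  have h1A : (1:ℝ) ≤ A := by
    rw [hA_def, ← Int.cast_abs]; exact_mod_cast Int.one_le_abs (hne K).1
  have h1B : (1:ℝ) ≤ B := by
    rw [hB_def, ← Int.cast_abs]; exact_mod_cast Int.one_le_abs (hne K).2
  have h1A' : (1:ℝ) ≤ A' := by
    rw [hA'_def, ← Int.cast_abs]; exact_mod_cast Int.one_le_abs (hne (K+1)).1
  have h1B' : (1:ℝ) ≤ B' := by
    rw [hB'_def, ← Int.cast_abs]; exact_mod_cast Int.one_le_abs (hne (K+1)).2
  have hq2 : Q K ^ 2 = A * B := by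
    rw [hQ K, Real.sq_sqrt (abs_nonneg _), abs_mul]
  have hQ2 : Q (K+1) ^ 2 = A' * B' := by
    rw [hQ (K+1), Real.sq_sqrt (abs_nonneg _), abs_mul]
  have hqnn : (0:ℝ) ≤ Q K := by rw [hQ K]; exact Real.sqrt_nonneg _
  have hq1 : 1 ≤ Q K := one_le_of_sq_eq hqnn hq2 (one_le_mul_one_le h1A h1B)
  have hqQ : Q K < Q (K+1) := hmono (Nat.lt_succ_self K)
  have hQq1 : (1:ℝ) ≤ Q (K+1) := le_trans hq1 hqQ.le
  have hQq0 : (0:ℝ) < Q (K+1) := by linarith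
  have hX0 : (0:ℝ) < Q (K+1) / 2 := by linarith
  -- process the solution
  have hx1 : x₁ ≠ 0 := by
    rintro rfl; simp at hpos
  have hy1 : y₁ ≠ 0 := by
    rintro rfl; simp at hpos
  set d : ℕ := Int.gcd x₁ y₁ with hd_def
  have hd0 : d ≠ 0 := fun h => hx1 (Int.gcd_eq_zero_iff.mp h).1
  set a : ℤ := x₁ / (d:ℤ) with ha_def
  set b : ℤ := y₁ / (d:ℤ) with hb_def
  have hxa : (d:ℤ) * a = x₁ := Int.mul_ediv_cancel' (Int.gcd_dvd_left x₁ y₁)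
  have hyb : (d:ℤ) * b = y₁ := Int.mul_ediv_cancel' (Int.gcd_dvd_right x₁ y₁)
  have hab_cop : IsCoprime a b := by
    rw [Int.isCoprime_iff_gcd_eq_one]
    exact Int.gcd_div_gcd_div_gcd (Nat.pos_of_ne_zero hd0)
  have ha : a ≠ 0 := fun h => hx1 (by rw [← hxa, h, mul_zero])
  have hb : b ≠ 0 := fun h => hy1 (by rw [← hyb, h, mul_zero])
  set s : ℝ := |(a : ℝ)| with hs_def
  set t : ℝ := |(b : ℝ)| with ht_def
  set N : ℝ := Real.sqrt |(a : ℝ) * (b : ℝ)| with hN_def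
  have h1s : (1:ℝ) ≤ s := by
    rw [hs_def, ← Int.cast_abs]; exact_mod_cast Int.one_le_abs ha
  have h1t : (1:ℝ) ≤ t := by
    rw [ht_def, ← Int.cast_abs]; exact_mod_cast Int.one_le_abs hb
  have hst : s * t = N ^ 2 := by
    rw [hN_def, Real.sq_sqrt (abs_nonneg _), abs_mul]
  have hNnn : (0:ℝ) ≤ N := Real.sqrt_nonneg _
  have h1N : (1:ℝ) ≤ N := one_le_of_sq_eq hNnn hst.symm (one_le_mul_one_le h1s h1t)
  have hdN : Real.sqrt |(x₁ : ℝ) * (y₁ : ℝ)| = (d:ℝ) * N := by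
    have e1 : (x₁ : ℝ) * (y₁ : ℝ) = (d:ℝ) ^ 2 * ((a:ℝ) * (b:ℝ)) := by
      rw [← hxa, ← hyb]; push_cast; ring
    rw [e1, abs_mul, abs_of_nonneg (by positivity : (0:ℝ) ≤ (d:ℝ) ^ 2),
      Real.sqrt_mul (by positivity) _, Real.sqrt_sq (by positivity : (0:ℝ) ≤ (d:ℝ)), hN_def]
  have hdN_le : (d:ℝ) * N ≤ Q (K+1) / 2 := by rw [← hdN]; exact hle
  have h1d : (1:ℝ) ≤ (d:ℝ) := by exact_mod_cast Nat.one_le_iff_ne_zero.mpr hd0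
  have hN_le : N ≤ Q (K+1) / 2 := by
    have h := mul_le_mul_of_nonneg_right h1d hNnn
    rw [one_mul] at h
    linarith
  set εw : ℝ := ‖(b : ℚ_[p]) * ξ - (a : ℚ_[p])‖ with hεw_def
  have hεw0 : (0:ℝ) ≤ εw := norm_nonneg _
  have hfact : ‖(y₁ : ℚ_[p]) * ξ - (x₁ : ℚ_[p])‖ = ‖((d:ℤ) : ℚ_[p])‖ * εw := by
    rw [hεw_def, ← norm_mul]
    congr 1
    rw [← hxa, ← hyb]; push_cast; ring
  have hdlb : (1:ℝ) ≤ ‖((d:ℤ) : ℚ_[p])‖ * (d:ℝ) := by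
    have h := padic_int_norm_lb' (p := p) (d:ℤ) (by exact_mod_cast hd0)
    rwa [show |((d:ℤ) : ℝ)| = (d:ℝ) by simp] at h
  have hεw_le : εw ≤ (d:ℝ) * (Q (K+1) / 2) ^ (-m) := by
    have h2 : εw ≤ (d:ℝ) * ‖(y₁ : ℚ_[p]) * ξ - (x₁ : ℚ_[p])‖ := mul_step hεw0 hdlb hfact
    refine le_trans h2 (mul_le_mul_of_nonneg_left herr (by positivity))
  have hNεw : N * εw ≤ (Q (K+1) / 2) ^ (1 - m) := by
    have h3 : N * εw ≤ (d:ℝ) * N * (Q (K+1) / 2) ^ (-m) := by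
      have h3' := mul_le_mul_of_nonneg_left hεw_le hNnn
      have e : N * ((d:ℝ) * (Q (K+1) / 2) ^ (-m)) = (d:ℝ) * N * (Q (K+1) / 2) ^ (-m) := by
        ring
      linarith [e ▸ h3']
    have h4 : (d:ℝ) * N * (Q (K+1) / 2) ^ (-m) ≤ (Q (K+1)/2) * (Q (K+1) / 2) ^ (-m) :=
      mul_le_mul_of_nonneg_right hdN_le (by positivity)
    have h5 : (Q (K+1)/2) * (Q (K+1) / 2) ^ (-m) = (Q (K+1)/2) ^ (1 - m) := by
      rw [show (1:ℝ) - m = 1 + (-m) by ring, Real.rpow_add hX0, Real.rpow_one]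
    linarith
  set P : ℝ := (Q (K+1) / 2) ^ (m - 1) with hP_def
  have hP0 : (0:ℝ) < P := Real.rpow_pos_of_pos hX0 _
  have hNP1 : N * εw * P ≤ 1 := by
    have h6 : (Q (K+1)/2) ^ (1-m) * P = 1 := by
      rw [hP_def, ← Real.rpow_add hX0, show (1-m) + (m-1) = 0 by ring, Real.rpow_zero]
    calc N * εw * P ≤ (Q (K+1)/2) ^ (1-m) * P :=
          mul_le_mul_of_nonneg_right hNεw hP0.le
      _ = 1 := h6
  have hεK_le : εK ≤ εw := hbest K a b hab_cop ha hb (by rw [← hN_def]; linarith)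
  have hεK1_lt : εK1 < εK := hdec (Nat.lt_succ_self K)
  have hεK1_le : εK1 ≤ εw := le_trans hεK1_lt.le hεK_le
  -- determinant Δ' against (x_{K+1}, y_{K+1})
  have hΔ' : N * P ≤ s * B' + A' * t := by
    set Δ' : ℤ := a * y (K+1) - x (K+1) * b with hΔ'_def
    have hΔ'ne : Δ' ≠ 0 := by
      intro h0
      obtain ⟨e1, e2⟩ := det_zero_abs_eq hab_cop (hcop (K+1)) h0
      have e1' : s = A' := by
        rw [hs_def, hA'_def, ← Int.cast_abs, ← Int.cast_abs]; exact_mod_cast e1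
      have e2' : t = B' := by
        rw [ht_def, hB'_def, ← Int.cast_abs, ← Int.cast_abs]; exact_mod_cast e2
      have hNsq : N ^ 2 = Q (K+1) ^ 2 := by rw [← hst, e1', e2', hQ2]
      exact ne_sq_half hNnn hN_le hQq1 hNsq
    have hnorm : ‖(Δ' : ℚ_[p])‖ ≤ εw := by
      refine le_trans (padic_det_norm_le ξ a b (x (K+1)) (y (K+1))) ?_
      exact max_le le_rfl hεK1_le
    have h7 : N * P ≤ |(Δ' : ℝ)| :=
      np_le_abs_det Δ' hΔ'ne hnorm (by linarith) hP0.le hNP1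
    refine le_trans h7 ?_
    rw [hΔ'_def]
    push_cast
    refine le_trans (abs_sub _ _) ?_
    rw [abs_mul, abs_mul]
  -- determinant D between consecutive best approximations
  have hD : N * P ≤ A * B' + A' * B := by
    set D : ℤ := x K * y (K+1) - x (K+1) * y K with hD_def
    have hDne : D ≠ 0 := by
      intro h0
      obtain ⟨e1, e2⟩ := det_zero_abs_eq (hcop K) (hcop (K+1)) h0
      have e1' : A = A' := by
        rw [hA_def, hA'_def, ← Int.cast_abs, ← Int.cast_abs]; exact_mod_cast e1
      have e2' : B = B' := by
        rw [hB_def, hB'_def, ← Int.cast_abs, ← Int.cast_abs]; exact_mod_cast e2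
      have hqsq : Q K ^ 2 = Q (K+1) ^ 2 := by rw [hq2, hQ2, e1', e2']
      exact ne_sq_lt hqnn hqQ hqsq
    have hnorm : ‖(D : ℚ_[p])‖ ≤ εw := by
      refine le_trans (padic_det_norm_le ξ (x K) (y K) (x (K+1)) (y (K+1))) ?_
      exact max_le hεK_le hεK1_le
    have h7 : N * P ≤ |(D : ℝ)| :=
      np_le_abs_det D hDne hnorm (by linarith) hP0.le hNP1
    refine le_trans h7 ?_
    rw [hD_def]
    push_cast
    refine le_trans (abs_sub _ _) ?_
    rw [abs_mul, abs_mul]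
  -- determinant Δ₀ against (x_K, y_K)
  have hΔ₀ : N * P ≤ s * B + A * t ∨ (s = A ∧ t = B ∧ N = Q K) := by
    rcases eq_or_ne (a * y K - x K * b) 0 with h0 | hΔ₀ne
    · right
      obtain ⟨e1, e2⟩ := det_zero_abs_eq hab_cop (hcop K) h0
      have e1' : s = A := by
        rw [hs_def, hA_def, ← Int.cast_abs, ← Int.cast_abs]; exact_mod_cast e1
      have e2' : t = B := by
        rw [ht_def, hB_def, ← Int.cast_abs, ← Int.cast_abs]; exact_mod_cast e2
      refine ⟨e1', e2', ?_⟩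
      have hNsq : N ^ 2 = Q K ^ 2 := by rw [← hst, e1', e2', hq2]
      exact eq_of_sq_eq hNnn hqnn hNsq
    · left
      have hnorm : ‖((a * y K - x K * b : ℤ) : ℚ_[p])‖ ≤ εw := by
        refine le_trans (padic_det_norm_le ξ a b (x K) (y K)) ?_
        exact max_le le_rfl hεK_le
      have h7 : N * P ≤ |((a * y K - x K * b : ℤ) : ℝ)| :=
        np_le_abs_det _ hΔ₀ne hnorm (by linarith) hP0.le hNP1
      refine le_trans h7 ?_
      push_cast
      refine le_trans (abs_sub _ _) ?_
      rw [abs_mul, abs_mul]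
  -- set up the power identities
  have h2m0 : (0:ℝ) < (2:ℝ) ^ m := Real.rpow_pos_of_pos two_pos m
  set pm : ℝ := (2:ℝ) ^ m with hpm_def
  set G : ℝ := (Q (K+1)) ^ (m - 3) with hG_def
  have hG0 : (0:ℝ) < G := Real.rpow_pos_of_pos hQq0 _
  have hPeq : pm * P = 2 * G * Q (K+1) ^ 2 := by
    have e1 : P = Q (K+1) ^ (m-1) / (2:ℝ) ^ (m-1) := by
      rw [hP_def, Real.div_rpow hQq0.le (by norm_num : (0:ℝ) ≤ 2)]
    have e2 : Q (K+1) ^ (m-1) = G * Q (K+1) ^ 2 := by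
      rw [show m - 1 = (m - 3) + 2 by ring, Real.rpow_add hQq0, hG_def]
      norm_num [Real.rpow_two]
    have e3 : (2:ℝ) ^ (m-1) = pm / 2 := by
      rw [hpm_def, Real.rpow_sub two_pos, Real.rpow_one]
    rw [e1, e2, e3]
    field_simp
  -- split on the balance hypothesis and conclude via core_real
  have hsqc0 : (0:ℝ) < Real.sqrt c := Real.sqrt_pos.mpr hc
  have hsqc2 : Real.sqrt c ^ 2 = c := Real.sq_sqrt hc.le
  rcases hbal with ⟨hb1, hb2⟩ | ⟨hb1, hb2⟩
  · -- case (i) : |x| ≥ c |y|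
    set sc : ℝ := Real.sqrt c with hsc_def
    have hscB : sc * B ≤ Q K := bal_sc1 hc (by linarith) hqnn hq2 hb1
    have hscB' : sc * B' ≤ Q (K+1) := bal_sc1 hc (by linarith) hQq0.le hQ2 hb2
    obtain ⟨hG1, hG2⟩ := big_helper h2m0 hsqc0 hbig
    exact core_real (Q K) (Q (K+1)) A B A' B' s t N P sc pm G hq1 hqQ.le h1B h1B' h1s h1t
      h1N (by linarith) (by linarith) hq2.symm hQ2.symm hst (by linarith) hsqc0 hscB hscB'
      h2m0 hP0 hG0 hPeq hG1 hG2 hD hΔ' hΔ₀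
  · -- case (ii) : |x| ≤ c |y|
    set sc : ℝ := (Real.sqrt c)⁻¹ with hsc_def
    have hsc0 : (0:ℝ) < sc := by positivity
    have hscA : sc * A ≤ Q K := bal_sc2 hc (by linarith) hqnn hq2 hb1
    have hscA' : sc * A' ≤ Q (K+1) := bal_sc2 hc (by linarith) hQq0.le hQ2 hb2
    have hbig' : pm * (1 + sc + sc⁻¹) < G := by
      have e : (1 + sc + sc⁻¹ : ℝ) = 1 + Real.sqrt c + (Real.sqrt c)⁻¹ := by
        rw [hsc_def, inv_inv]; ring
      rw [e]; exact hbig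
    obtain ⟨hG1, hG2⟩ := big_helper h2m0 hsc0 hbig'
    have hD' : N * P ≤ B * A' + B' * A := by
      have e : B * A' + B' * A = A * B' + A' * B := by ring
      rw [e]; exact hD
    have hΔ'' : N * P ≤ t * A' + B' * s := by
      have e : t * A' + B' * s = s * B' + A' * t := by ring
      rw [e]; exact hΔ'
    have hΔ₀' : N * P ≤ t * A + B * s ∨ (t = B ∧ s = A ∧ N = Q K) := by
      rcases hΔ₀ with h | ⟨e1, e2, e3⟩
      · left; have e : t * A + B * s = s * B + A * t := by ring
        rw [e]; exact h
      · right; exact ⟨e2, e1, e3⟩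
    exact core_real (Q K) (Q (K+1)) B A B' A' t s N P sc pm G hq1 hqQ.le h1A h1A' h1t h1s
      h1N (by linarith) (by linarith) (by rw [mul_comm]; exact hq2.symm) (by rw [mul_comm]; exact hQ2.symm)
      (by rw [mul_comm]; exact hst) (by linarith) hsc0 hscA hscA' h2m0 hP0 hG0 hPeq hG1 hG2
      hD' hΔ'' hΔ₀'


end KeyLemma

/-- Let `(x_k, y_k)` be a sequence of multiplicative best approximations to an irrational
`ξ ∈ ℚ_p`. If (i) for some `c > 0` there are infinitely many `k` with `|x_k| ≥ c|y_k|` and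
`|x_{k+1}| ≥ c|y_{k+1}|`, or (ii) for some `c > 0` there are infinitely many `k` with
`|x_k| ≤ c|y_k|` and `|x_{k+1}| ≤ c|y_{k+1}|`, then `μ̂×(ξ) ≤ 3`. -/
theorem statement17 (p : ℕ) [Fact p.Prime] (ξ : ℚ_[p]) (hξ : PadicIrrational p ξ)
    (x y : ℕ → ℤ) (Q : ℕ → ℝ)
    (hQ : ∀ k, Q k = Real.sqrt |(x k : ℝ) * (y k : ℝ)|)
    (hcop : ∀ k, IsCoprime (x k) (y k))
    (hne : ∀ k, x k ≠ 0 ∧ y k ≠ 0)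
    (hmono : StrictMono Q)
    (htend : Tendsto Q atTop atTop)
    (hdec : StrictAnti fun k => ‖(y k : ℚ_[p]) * ξ - (x k : ℚ_[p])‖)
    (hbest : ∀ k, ∀ a b : ℤ, IsCoprime a b → a ≠ 0 → b ≠ 0 →
      Real.sqrt |(a : ℝ) * (b : ℝ)| < Q (k + 1) →
      ‖(y k : ℚ_[p]) * ξ - (x k : ℚ_[p])‖ ≤ ‖(b : ℚ_[p]) * ξ - (a : ℚ_[p])‖)
    (hyp :
      (∃ c : ℝ, 0 < c ∧ ∀ N : ℕ, ∃ k ≥ N,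
        c * |(y k : ℝ)| ≤ |(x k : ℝ)| ∧ c * |(y (k + 1) : ℝ)| ≤ |(x (k + 1) : ℝ)|) ∨
      (∃ c : ℝ, 0 < c ∧ ∀ N : ℕ, ∃ k ≥ N,
        |(x k : ℝ)| ≤ c * |(y k : ℝ)| ∧ |(x (k + 1) : ℝ)| ≤ c * |(y (k + 1) : ℝ)|)) :
    muHatTimesExp p ξ ≤ 3 := by
  rw [muHatTimesExp]
  refine sSup_le ?_
  rintro v ⟨m, hmS, rfl⟩
  simp only [Set.mem_setOf_eq] at hmS
  by_contra hcon
  push_neg at hcon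
  have hm3 : (3:ℝ) < m := by
    by_contra h
    push_neg at h
    have h1 : ENNReal.ofReal m ≤ ENNReal.ofReal 3 := ENNReal.ofReal_le_ofReal h
    have h2 : ENNReal.ofReal (3:ℝ) = (3:ℝ≥0∞) := by
      rw [show (3:ℝ) = ((3:ℕ):ℝ) by norm_num, ENNReal.ofReal_natCast]
      norm_num
    rw [h2] at h1
    exact absurd h1 (not_le.mpr hcon)
  obtain ⟨X₀, hX₀⟩ := eventually_atTop.mp hmS
  have hmain : ∀ c : ℝ, 0 < c →
      (∀ N : ℕ, ∃ k ≥ N,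
        (c * |(y k : ℝ)| ≤ |(x k : ℝ)| ∧ c * |(y (k + 1) : ℝ)| ≤ |(x (k + 1) : ℝ)|) ∨
        (|(x k : ℝ)| ≤ c * |(y k : ℝ)| ∧ |(x (k + 1) : ℝ)| ≤ c * |(y (k + 1) : ℝ)|)) →
      False := by
    intro c hc hbal
    set C : ℝ := (2:ℝ) ^ m * (1 + Real.sqrt c + (Real.sqrt c)⁻¹) with hC_def
    have hC0 : (0:ℝ) < C := by
      have := Real.rpow_pos_of_pos (show (0:ℝ) < 2 by norm_num) m
      have h1 : (0:ℝ) < Real.sqrt c := Real.sqrt_pos.mpr hc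
      positivity
    set R : ℝ := max (2 * |X₀| + 1) (C ^ (1/(m-3)) + 1) with hR_def
    obtain ⟨M, hM⟩ := eventually_atTop.mp (htend.eventually_ge_atTop R)
    obtain ⟨K, hKM, hKbal⟩ := hbal M
    have hQR : R ≤ Q (K+1) := hM (K+1) (by omega)
    have hbig : C < Q (K+1) ^ (m - 3) := by
      have h1 : C ^ (1/(m-3)) < Q (K+1) := by
        have := le_trans (le_max_right (2 * |X₀| + 1) (C ^ (1/(m-3)) + 1)) hQR
        linarith
      have h2 : (C ^ (1/(m-3))) ^ (m-3) = C := by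
        rw [← Real.rpow_mul hC0.le, one_div_mul_cancel (by linarith : m - 3 ≠ 0),
          Real.rpow_one]
      calc C = (C ^ (1/(m-3))) ^ (m-3) := h2.symm
        _ < Q (K+1) ^ (m-3) :=
            Real.rpow_lt_rpow (Real.rpow_nonneg hC0.le _) h1 (by linarith)
    have hX0le : X₀ ≤ Q (K+1) / 2 := by
      have h1 := le_trans (le_max_left (2 * |X₀| + 1) (C ^ (1/(m-3)) + 1)) hQR
      have h2 := le_abs_self X₀
      linarith
    exact key ξ x y Q hQ hcop hne hmono hdec hbest m hm3 c hc K hKbal hbig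
      (hX₀ _ hX0le)
  rcases hyp with ⟨c, hc, hbal⟩ | ⟨c, hc, hbal⟩
  · exact hmain c hc (fun N => by
      obtain ⟨k, hk, h1, h2⟩ := hbal N
      exact ⟨k, hk, Or.inl ⟨h1, h2⟩⟩)
  · exact hmain c hc (fun N => by
      obtain ⟨k, hk, h1, h2⟩ := hbal N
      exact ⟨k, hk, Or.inr ⟨h1, h2⟩⟩)
end

section
/- Let ξ ∈ ℚ_p be irrational with μ×(ξ) finite, and let ((x_k×, y_k×))_{k≥1} be a sequence of multiplicative best approximations to ξ, with Q_k× = |x_k× y_k×|^{1/2}. Then limsup_{k→∞} (log Q_{k+1}×)/(log Q_k×) ≤ (μ×(ξ) − 1)/(μ̂×(ξ) − 1). -/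
open Filter MeasureTheory
open scoped ENNReal

open scoped Topology

section Aux

variable {p : ℕ} [hp : Fact p.Prime]

/-- For a nonzero integer `d`, `1 ≤ |d| * ‖d‖_p`. -/
lemma aux_one_le_abs_mul_norm (d : ℤ) (hd : d ≠ 0) :
    (1 : ℝ) ≤ |(d : ℝ)| * ‖(d : ℚ_[p])‖ := by
  have hnorm : ‖(d : ℚ_[p])‖ = ((padicNorm p (d : ℚ) : ℚ) : ℝ) := by
    rw [show ((d : ℚ_[p])) = (((d : ℚ) : ℚ_[p])) by norm_cast]
    exact Padic.eq_padicNorm _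
  have hdq : ((d : ℚ)) ≠ 0 := Int.cast_ne_zero.2 hd
  set v : ℕ := padicValInt p d with hv
  have hval : padicNorm p (d : ℚ) = (p : ℚ) ^ (-(v : ℤ)) := by
    rw [padicNorm.eq_zpow_of_nonzero hdq]
    congr 1
    congr 1
    rw [padicValRat.of_int]
  have hdvd : (p : ℤ) ^ v ∣ d := padicValInt_dvd d
  have hle : (p : ℤ) ^ v ≤ |d| := Int.le_of_dvd (abs_pos.2 hd) ((dvd_abs _ _).2 hdvd)
  have hppos : (0 : ℝ) < (p : ℝ) := by exact_mod_cast hp.out.pos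
  have h1 : ((p : ℝ)) ^ (v : ℤ) ≤ |(d : ℝ)| := by
    have := hle
    have : ((p : ℤ) ^ v : ℤ) ≤ |d| := hle
    calc ((p : ℝ)) ^ (v : ℤ) = (((p : ℤ) ^ v : ℤ) : ℝ) := by
          rw [zpow_natCast]; push_cast; ring
      _ ≤ ((|d| : ℤ) : ℝ) := by exact_mod_cast this
      _ = |(d : ℝ)| := by push_cast; ring
  have h2 : ‖(d : ℚ_[p])‖ = ((p : ℝ)) ^ (-(v : ℤ)) := by
    rw [hnorm, hval]; push_cast [zpow_neg]; ring
  calc (1 : ℝ) = ((p : ℝ)) ^ (v : ℤ) * ((p : ℝ)) ^ (-(v : ℤ)) := by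
        rw [← zpow_add₀ (ne_of_gt hppos)]; simp
    _ ≤ |(d : ℝ)| * ‖(d : ℚ_[p])‖ := by
        rw [h2]
        exact mul_le_mul_of_nonneg_right h1 (by positivity)

lemma aux_norm_linear_pos {ξ : ℚ_[p]} (hξ : PadicIrrational p ξ)
    (a b : ℤ) (hb : b ≠ 0) : 0 < ‖(b : ℚ_[p]) * ξ - (a : ℚ_[p])‖ := by
  rw [norm_pos_iff]
  intro h0
  have hb' : (b : ℚ_[p]) ≠ 0 := Int.cast_ne_zero.2 hb
  have hBA : (b : ℚ_[p]) * ξ = (a : ℚ_[p]) := by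
    have := sub_eq_zero.1 h0
    exact this
  have hx : ξ = (a : ℚ_[p]) / (b : ℚ_[p]) := by
    rw [eq_div_iff hb', mul_comm]; exact hBA
  exact hξ ((a : ℚ) / (b : ℚ)) (by push_cast; exact hx.symm)

lemma aux_one_le_sqrt (a b : ℤ) (ha : a ≠ 0) (hb : b ≠ 0) :
    1 ≤ Real.sqrt |(a : ℝ) * (b : ℝ)| := by
  rw [Real.one_le_sqrt]
  have h1 : (1 : ℤ) ≤ |a * b| := Int.one_le_abs (mul_ne_zero ha hb)
  calc (1 : ℝ) ≤ ((|a * b| : ℤ) : ℝ) := by exact_mod_cast h1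
    _ = |(a : ℝ) * (b : ℝ)| := by push_cast; ring

end Aux
section Dirichlet

variable {p : ℕ} [hp : Fact p.Prime]

/-- Integer approximation with size control, for `p`-adic numbers of norm at most 1. -/
lemma aux_approx (ζ : ℚ_[p]) (h1 : ‖ζ‖ ≤ 1) :
    ∀ᶠ X : ℝ in atTop, ∃ x : ℤ,
      Real.sqrt |(x : ℝ)| ≤ X ∧ ‖ζ - (x : ℚ_[p])‖ ≤ X ^ (-(7/4 : ℝ)) := by
  have hp1 : (1 : ℝ) < (p : ℝ) := by exact_mod_cast hp.out.one_lt
  have hppos : (0 : ℝ) < (p : ℝ) := lt_trans one_pos hp1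
  filter_upwards [eventually_ge_atTop ((p : ℝ) ^ (4 : ℕ)), eventually_ge_atTop (1 : ℝ)]
    with X hXp hX1
  have hXpos : (0 : ℝ) < X := lt_of_lt_of_le one_pos hX1
  set ζ' : ℤ_[p] := ⟨ζ, h1⟩ with hζ'
  set c : ℝ := Real.logb p (X ^ ((7 : ℝ)/4)) with hc
  set n : ℕ := ⌈c⌉₊ with hn
  have h74pos : (0 : ℝ) < X ^ ((7 : ℝ)/4) := Real.rpow_pos_of_pos hXpos _
  have hc0 : 0 ≤ c := Real.logb_nonneg hp1 (Real.one_le_rpow hX1 (by norm_num))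
  have hpc : (p : ℝ) ^ c = X ^ ((7 : ℝ)/4) := Real.rpow_logb hppos (ne_of_gt hp1) h74pos
  have hpn_ge : X ^ ((7 : ℝ)/4) ≤ (p : ℝ) ^ (n : ℕ) := by
    rw [← hpc, ← Real.rpow_natCast]
    exact Real.rpow_le_rpow_of_exponent_le hp1.le (Nat.le_ceil c)
  have hpn_le : ((p : ℝ)) ^ (n : ℕ) ≤ (p : ℝ) * X ^ ((7 : ℝ)/4) := by
    have hcn : (n : ℝ) ≤ c + 1 := le_of_lt (Nat.ceil_lt_add_one hc0)
    calc ((p : ℝ)) ^ (n : ℕ) = (p : ℝ) ^ ((n : ℕ) : ℝ) := (Real.rpow_natCast _ _).symm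
      _ ≤ (p : ℝ) ^ (c + 1) := Real.rpow_le_rpow_of_exponent_le hp1.le hcn
      _ = (p : ℝ) ^ c * (p : ℝ) ^ (1 : ℝ) := Real.rpow_add hppos _ _
      _ = (p : ℝ) * X ^ ((7 : ℝ)/4) := by rw [hpc, Real.rpow_one]; ring
  refine ⟨(ζ'.appr n : ℤ), ?_, ?_⟩
  · -- size bound
    have happr : (ζ'.appr n : ℝ) < (p : ℝ) ^ (n : ℕ) := by
      exact_mod_cast PadicInt.appr_lt ζ' n
    have hquarter : (p : ℝ) ≤ X ^ ((1 : ℝ)/4) := by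
      have : ((p : ℝ) ^ (4 : ℕ)) ^ ((1 : ℝ)/4) ≤ X ^ ((1 : ℝ)/4) :=
        Real.rpow_le_rpow (by positivity) hXp (by norm_num)
      calc (p : ℝ) = ((p : ℝ) ^ (4 : ℕ)) ^ ((1 : ℝ)/4) := by
            rw [← Real.rpow_natCast (p : ℝ) 4, ← Real.rpow_mul hppos.le]
            norm_num
        _ ≤ X ^ ((1 : ℝ)/4) := this
    have hsize : |((ζ'.appr n : ℤ) : ℝ)| ≤ X ^ (2 : ℝ) := by
      have h0 : (0 : ℝ) ≤ ((ζ'.appr n : ℤ) : ℝ) := by positivity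
      rw [abs_of_nonneg h0]
      have : ((ζ'.appr n : ℤ) : ℝ) = ((ζ'.appr n : ℕ) : ℝ) := by push_cast; ring
      rw [this]
      calc ((ζ'.appr n : ℕ) : ℝ) ≤ (p : ℝ) ^ (n : ℕ) := le_of_lt happr
        _ ≤ (p : ℝ) * X ^ ((7 : ℝ)/4) := hpn_le
        _ ≤ X ^ ((1 : ℝ)/4) * X ^ ((7 : ℝ)/4) :=
            mul_le_mul_of_nonneg_right hquarter h74pos.le
        _ = X ^ (2 : ℝ) := by
            rw [← Real.rpow_add hXpos]; norm_num
    calc Real.sqrt |((ζ'.appr n : ℤ) : ℝ)| ≤ Real.sqrt (X ^ (2 : ℝ)) :=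
          Real.sqrt_le_sqrt hsize
      _ = X := by
          rw [show (2 : ℝ) = ((2 : ℕ) : ℝ) by norm_num, Real.rpow_natCast,
            Real.sqrt_sq hXpos.le]
  · -- norm bound
    have hmem := PadicInt.appr_spec n ζ'
    have hnb : ‖ζ' - (ζ'.appr n : ℤ_[p])‖ ≤ (p : ℝ) ^ (-(n : ℤ)) :=
      (PadicInt.norm_le_pow_iff_mem_span_pow _ n).2 hmem
    have hcast : ‖ζ - (((ζ'.appr n : ℤ)) : ℚ_[p])‖ = ‖ζ' - (ζ'.appr n : ℤ_[p])‖ := by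
      rw [PadicInt.norm_def]
      congr 1
    rw [hcast]
    refine le_trans hnb ?_
    have h1' : X ^ ((7 : ℝ)/4) ≤ (p : ℝ) ^ (n : ℕ) := hpn_ge
    have hXne : X ^ ((7 : ℝ)/4) ≠ 0 := ne_of_gt h74pos
    rw [show ((p : ℝ)) ^ (-(n : ℤ)) = ((p : ℝ) ^ (n : ℕ))⁻¹ by
      rw [zpow_neg, zpow_natCast]]
    rw [show X ^ (-(7/4 : ℝ)) = (X ^ ((7 : ℝ)/4))⁻¹ by
      rw [← Real.rpow_neg hXpos.le]]
    exact inv_anti₀ h74pos h1'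

end Dirichlet
section Exponents

variable {p : ℕ} [hp : Fact p.Prime]

lemma aux_dirichlet {ξ : ℚ_[p]} (hξ : PadicIrrational p ξ) :
    ∀ᶠ X : ℝ in atTop, ∃ x y : ℤ,
      0 < Real.sqrt |(x : ℝ) * (y : ℝ)| ∧ Real.sqrt |(x : ℝ) * (y : ℝ)| ≤ X ∧
      ‖(y : ℚ_[p]) * ξ - (x : ℚ_[p])‖ ≤ X ^ (-(3/2 : ℝ)) := by
  have hξ0 : ξ ≠ 0 := by
    intro h
    exact hξ 0 (by rw [h]; simp)
  by_cases h1 : ‖ξ‖ ≤ 1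
  · have hev := aux_approx ξ h1
    have hnpos : 0 < ‖ξ‖ := norm_pos_iff.2 hξ0
    have hsmall : ∀ᶠ X : ℝ in atTop, X ^ (-(7/4 : ℝ)) < ‖ξ‖ :=
      (tendsto_rpow_neg_atTop (by norm_num : (0:ℝ) < 7/4)).eventually
        (gt_mem_nhds hnpos)
    filter_upwards [hev, hsmall, eventually_ge_atTop (1 : ℝ)] with X hX hXs hX1
    obtain ⟨x, hxsize, hxnorm⟩ := hX
    have hx0 : x ≠ 0 := by
      rintro rfl
      simp only [Int.cast_zero, sub_zero] at hxnorm
      exact absurd (lt_of_le_of_lt hxnorm hXs) (lt_irrefl _)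
    have hx0' : (x : ℝ) ≠ 0 := Int.cast_ne_zero.2 hx0
    refine ⟨x, 1, ?_, ?_, ?_⟩
    · rw [Real.sqrt_pos, Int.cast_one, mul_one]
      exact abs_pos.2 hx0'
    · rw [Int.cast_one, mul_one]
      exact hxsize
    · rw [Int.cast_one, one_mul]
      calc ‖ξ - (x : ℚ_[p])‖ ≤ X ^ (-(7/4 : ℝ)) := hxnorm
        _ ≤ X ^ (-(3/2 : ℝ)) := Real.rpow_le_rpow_of_exponent_le hX1 (by norm_num)
  · push_neg at h1
    set ζ : ℚ_[p] := ξ⁻¹ with hζdef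
    have hζ0 : ζ ≠ 0 := inv_ne_zero hξ0
    have hζ1 : ‖ζ‖ ≤ 1 := by
      rw [hζdef, norm_inv]
      exact inv_le_one_of_one_le₀ h1.le
    have hev := aux_approx ζ hζ1
    have hnpos : 0 < ‖ζ‖ := norm_pos_iff.2 hζ0
    have hsmall : ∀ᶠ X : ℝ in atTop, X ^ (-(7/4 : ℝ)) < ‖ζ‖ :=
      (tendsto_rpow_neg_atTop (by norm_num : (0:ℝ) < 7/4)).eventually
        (gt_mem_nhds hnpos)
    have hbig : ∀ᶠ X : ℝ in atTop, ‖ξ‖ ≤ X ^ ((1 : ℝ)/4) :=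
      (tendsto_rpow_atTop (by norm_num : (0:ℝ) < 1/4)).eventually_ge_atTop ‖ξ‖
    filter_upwards [hev, hsmall, hbig, eventually_ge_atTop (1 : ℝ)] with X hX hXs hXb hX1
    have hXpos : (0 : ℝ) < X := lt_of_lt_of_le one_pos hX1
    obtain ⟨z, hzsize, hznorm⟩ := hX
    have hz0 : z ≠ 0 := by
      rintro rfl
      simp only [Int.cast_zero, sub_zero] at hznorm
      exact absurd (lt_of_le_of_lt hznorm hXs) (lt_irrefl _)
    have hz0' : (z : ℝ) ≠ 0 := Int.cast_ne_zero.2 hz0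
    refine ⟨1, z, ?_, ?_, ?_⟩
    · rw [Real.sqrt_pos, Int.cast_one, one_mul]
      exact abs_pos.2 hz0'
    · rw [Int.cast_one, one_mul]
      exact hzsize
    · have hfact : (z : ℚ_[p]) * ξ - ((1 : ℤ) : ℚ_[p]) = ξ * ((z : ℚ_[p]) - ζ) := by
        rw [hζdef, mul_sub, mul_inv_cancel₀ hξ0, mul_comm ξ]
        push_cast
        ring
      rw [hfact, norm_mul, norm_sub_rev]
      calc ‖ξ‖ * ‖ζ - (z : ℚ_[p])‖ ≤ X ^ ((1 : ℝ)/4) * X ^ (-(7/4 : ℝ)) := by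
            apply mul_le_mul hXb hznorm (norm_nonneg _) (by positivity)
        _ = X ^ (-(3/2 : ℝ)) := by
            rw [← Real.rpow_add hXpos]; norm_num

lemma aux_mem_uniform_of_lt {ξ : ℚ_[p]} {m : ℝ}
    (hm : ENNReal.ofReal m < muHatTimesExp p ξ) :
    ∀ᶠ X : ℝ in atTop, ∃ x y : ℤ,
      0 < Real.sqrt |(x : ℝ) * (y : ℝ)| ∧ Real.sqrt |(x : ℝ) * (y : ℝ)| ≤ X ∧
      ‖(y : ℚ_[p]) * ξ - (x : ℚ_[p])‖ ≤ X ^ (-m) := by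
  rw [muHatTimesExp, lt_sSup_iff] at hm
  obtain ⟨e, he, hlt⟩ := hm
  obtain ⟨m', hm', rfl⟩ := he
  have hmm' : m ≤ m' := by
    by_contra hcon
    push_neg at hcon
    exact absurd (ENNReal.ofReal_le_ofReal hcon.le) (not_le.2 hlt)
  filter_upwards [hm', eventually_ge_atTop (1 : ℝ)] with X hX hX1
  obtain ⟨x, y, h1, h2, h3⟩ := hX
  exact ⟨x, y, h1, h2,
    le_trans h3 (Real.rpow_le_rpow_of_exponent_le hX1 (by linarith))⟩

lemma aux_eventually_norm_gt {ξ : ℚ_[p]} (hξ : PadicIrrational p ξ)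
    (x y : ℕ → ℤ) (hne : ∀ k, x k ≠ 0 ∧ y k ≠ 0)
    (hdec : StrictAnti fun k => ‖(y k : ℚ_[p]) * ξ - (x k : ℚ_[p])‖)
    {w : ℝ} (hw : muTimesExp p ξ < ENNReal.ofReal w) :
    ∀ᶠ k in atTop, Real.sqrt |(x k : ℝ) * (y k : ℝ)| ^ (-w)
      < ‖(y k : ℚ_[p]) * ξ - (x k : ℚ_[p])‖ := by
  set S := {q : ℤ × ℤ | q.1 ≠ 0 ∧ q.2 ≠ 0 ∧
      0 < ‖(q.2 : ℚ_[p]) * ξ - (q.1 : ℚ_[p])‖ ∧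
      ‖(q.2 : ℚ_[p]) * ξ - (q.1 : ℚ_[p])‖ ≤ (Real.sqrt |(q.1 : ℝ) * (q.2 : ℝ)|) ^ (-w)}
    with hSdef
  have hSfin : S.Finite := by
    by_contra hinf
    have hinf' : S.Infinite := hinf
    have : ENNReal.ofReal w ≤ muTimesExp p ξ := le_sSup ⟨w, hinf', rfl⟩
    exact absurd hw (not_lt.2 this)
  have hinj : Function.Injective (fun k => (x k, y k)) := by
    intro i j hij
    have hxe : x i = x j := congrArg Prod.fst hij
    have hye : y i = y j := congrArg Prod.snd hij
    apply hdec.injective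
    simp only [hxe, hye]
  have hsub : {k : ℕ | ‖(y k : ℚ_[p]) * ξ - (x k : ℚ_[p])‖
      ≤ Real.sqrt |(x k : ℝ) * (y k : ℝ)| ^ (-w)} ⊆ (fun k => (x k, y k)) ⁻¹' S := by
    intro k hk
    exact ⟨(hne k).1, (hne k).2, aux_norm_linear_pos hξ _ _ (hne k).2, hk⟩
  have hBadFin : Set.Finite {k : ℕ | ‖(y k : ℚ_[p]) * ξ - (x k : ℚ_[p])‖
      ≤ Real.sqrt |(x k : ℝ) * (y k : ℝ)| ^ (-w)} :=
    (hSfin.preimage hinj.injOn).subset hsub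
  have hev := hBadFin.eventually_cofinite_notMem
  rw [Nat.cofinite_eq_atTop] at hev
  filter_upwards [hev] with k hk
  exact not_le.1 hk

lemma aux_hat_le_times {ξ : ℚ_[p]} (hξ : PadicIrrational p ξ) :
    muHatTimesExp p ξ ≤ muTimesExp p ξ := by
  apply sSup_le
  rintro e ⟨m, hm, rfl⟩
  rcases le_or_gt m 0 with hm0 | hm0
  · calc ENNReal.ofReal m = 0 := ENNReal.ofReal_eq_zero.2 hm0
      _ ≤ muTimesExp p ξ := zero_le
  · apply le_sSup
    refine ⟨m, ?_, rfl⟩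
    set S := {q : ℤ × ℤ | q.1 ≠ 0 ∧ q.2 ≠ 0 ∧
        0 < ‖(q.2 : ℚ_[p]) * ξ - (q.1 : ℚ_[p])‖ ∧
        ‖(q.2 : ℚ_[p]) * ξ - (q.1 : ℚ_[p])‖ ≤ (Real.sqrt |(q.1 : ℝ) * (q.2 : ℝ)|) ^ (-m)}
      with hSdef
    show S.Infinite
    by_contra hfin
    rw [Set.not_infinite] at hfin
    obtain ⟨X₀, hX₀⟩ := eventually_atTop.1 hm
    have hmem : ∀ X : ℝ, 1 ≤ X → X₀ ≤ X →
        ∃ q ∈ S, ‖(q.2 : ℚ_[p]) * ξ - (q.1 : ℚ_[p])‖ ≤ X ^ (-m) := by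
      intro X hX1 hXX₀
      obtain ⟨a, b, h1, h2, h3⟩ := hX₀ X hXX₀
      have habs : (a : ℝ) * (b : ℝ) ≠ 0 := by
        intro h
        rw [h] at h1
        simp at h1
      have ha0 : a ≠ 0 := by
        intro h
        apply habs
        rw [h]; simp
      have hb0 : b ≠ 0 := by
        intro h
        apply habs
        rw [h]; simp
      refine ⟨(a, b), ⟨ha0, hb0, aux_norm_linear_pos hξ _ _ hb0, ?_⟩, h3⟩
      exact le_trans h3 (Real.rpow_le_rpow_of_nonpos h1 h2 (by linarith))
    have hSne : S.Nonempty := by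
      obtain ⟨q, hq, -⟩ := hmem (max X₀ 1) (le_max_right _ _) (le_max_left _ _)
      exact ⟨q, hq⟩
    obtain ⟨q₀, hq₀, hq₀min⟩ := Set.exists_min_image S
      (fun q : ℤ × ℤ => ‖(q.2 : ℚ_[p]) * ξ - (q.1 : ℚ_[p])‖) hfin hSne
    have hεpos : 0 < ‖(q₀.2 : ℚ_[p]) * ξ - (q₀.1 : ℚ_[p])‖ := hq₀.2.2.1
    have hsmall : ∀ᶠ X : ℝ in atTop,
        X ^ (-m) < ‖(q₀.2 : ℚ_[p]) * ξ - (q₀.1 : ℚ_[p])‖ :=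
      (tendsto_rpow_neg_atTop hm0).eventually (gt_mem_nhds hεpos)
    obtain ⟨X, hXX₀, hX1, hXs⟩ :=
      ((eventually_ge_atTop X₀).and ((eventually_ge_atTop (1:ℝ)).and hsmall)).exists
    obtain ⟨q, hq, hqnorm⟩ := hmem X hX1 hXX₀
    exact absurd (lt_of_le_of_lt hqnorm hXs) (not_lt.2 (hq₀min q hq))

end Exponents
lemma aux_frac {A B δ ε : ℝ} (hBpos : 0 < B) (hApos : 0 < A) (hε : 0 < ε)
    (hδpos : 0 < δ) (hδB : δ ≤ B/2) (hδ4 : δ * (4 * (A + B)) ≤ ε * B^2) :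
    (A + δ)/(B - δ) ≤ A/B + ε/2 := by
  have hBδ : 0 < B - δ := by linarith
  have hB0 : B ≠ 0 := hBpos.ne'
  have h1 : (ε * B / 2) / B = ε / 2 := by
    rw [div_div, mul_comm (2:ℝ) B, ← div_div, mul_div_assoc, div_self hB0, mul_one]
  have hAB2 : A/B + ε/2 = (A + ε*B/2)/B := by
    rw [add_div, h1]
  rw [hAB2, div_le_div_iff₀ hBδ hBpos]
  have hεδ : ε * B * δ ≤ ε * B * (B/2) :=
    mul_le_mul_of_nonneg_left hδB (by positivity)
  linarith [hδ4, hεδ]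

set_option maxHeartbeats 1000000 in
/-- For a sequence of multiplicative best approximations `(x_k, y_k)` to an irrational `ξ`
with `μ×(ξ)` finite, one has
`limsup (log Q_{k+1})/(log Q_k) ≤ (μ×(ξ) - 1)/(μ̂×(ξ) - 1)`, where
`Q_k = |x_k y_k|^(1/2)`. -/
theorem statement18 (p : ℕ) [Fact p.Prime] (ξ : ℚ_[p]) (hξ : PadicIrrational p ξ)
    (hfin : muTimesExp p ξ ≠ ⊤)
    (x y : ℕ → ℤ) (Q : ℕ → ℝ)
    (hQ : ∀ k, Q k = Real.sqrt |(x k : ℝ) * (y k : ℝ)|)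
    (hcop : ∀ k, IsCoprime (x k) (y k))
    (hne : ∀ k, x k ≠ 0 ∧ y k ≠ 0)
    (hmono : StrictMono Q)
    (htend : Tendsto Q atTop atTop)
    (hdec : StrictAnti fun k => ‖(y k : ℚ_[p]) * ξ - (x k : ℚ_[p])‖)
    (hbest : ∀ k, ∀ a b : ℤ, IsCoprime a b → a ≠ 0 → b ≠ 0 →
      Real.sqrt |(a : ℝ) * (b : ℝ)| < Q (k + 1) →
      ‖(y k : ℚ_[p]) * ξ - (x k : ℚ_[p])‖ ≤ ‖(b : ℚ_[p]) * ξ - (a : ℚ_[p])‖) :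
    atTop.limsup (fun k => ENNReal.ofReal (Real.log (Q (k + 1)) / Real.log (Q k)))
      ≤ (muTimesExp p ξ - 1) / (muHatTimesExp p ξ - 1) := by
  classical
  have hhat_le := aux_hat_le_times hξ
  have hhatfin : muHatTimesExp p ξ ≠ ⊤ := ne_top_of_le_ne_top hfin hhat_le
  have h32 : ENNReal.ofReal (3/2 : ℝ) ≤ muHatTimesExp p ξ :=
    le_sSup ⟨3/2, aux_dirichlet hξ, rfl⟩
  obtain ⟨μr, hμeq, hμr0⟩ : ∃ t : ℝ, muTimesExp p ξ = ENNReal.ofReal t ∧ 0 ≤ t :=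
    ⟨(muTimesExp p ξ).toReal, (ENNReal.ofReal_toReal hfin).symm, ENNReal.toReal_nonneg⟩
  obtain ⟨νr, hνeq, hνr0⟩ : ∃ t : ℝ, muHatTimesExp p ξ = ENNReal.ofReal t ∧ 0 ≤ t :=
    ⟨(muHatTimesExp p ξ).toReal, (ENNReal.ofReal_toReal hhatfin).symm,
      ENNReal.toReal_nonneg⟩
  have hνr32 : (3/2 : ℝ) ≤ νr := by
    rw [hνeq] at h32
    exact (ENNReal.ofReal_le_ofReal_iff hνr0).1 h32
  have hμν : νr ≤ μr := by
    rw [hμeq, hνeq] at hhat_le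
    exact (ENNReal.ofReal_le_ofReal_iff hμr0).1 hhat_le
  set A : ℝ := μr - 1 with hAdef
  set B : ℝ := νr - 1 with hBdef
  have hB2 : (1/2 : ℝ) ≤ B := by rw [hBdef]; linarith
  have hBpos : (0 : ℝ) < B := by linarith
  have hAB : B ≤ A := by rw [hAdef, hBdef]; linarith
  have hApos : (0 : ℝ) < A := by linarith
  have hRHS : (muTimesExp p ξ - 1) / (muHatTimesExp p ξ - 1) = ENNReal.ofReal (A / B) := by
    rw [hμeq, hνeq, ← ENNReal.ofReal_one, ← ENNReal.ofReal_sub _ zero_le_one,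
      ← ENNReal.ofReal_sub _ zero_le_one, ENNReal.ofReal_div_of_pos hBpos]
  rw [hRHS]
  -- basic facts about the sequence
  have hQ1 : ∀ k, 1 ≤ Q k := fun k => by
    rw [hQ k]; exact aux_one_le_sqrt _ _ (hne k).1 (hne k).2
  have hLpos : ∀ k, 0 < ‖(y k : ℚ_[p]) * ξ - (x k : ℚ_[p])‖ := fun k =>
    aux_norm_linear_pos hξ _ _ (hne k).2
  have htendsucc : Tendsto (fun k => Q (k + 1)) atTop atTop :=
    htend.comp (tendsto_add_atTop_nat 1)
  have htendX : Tendsto (fun k => Q (k + 1) - 1) atTop atTop := by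
    simpa [sub_eq_add_neg] using tendsto_atTop_add_const_right atTop (-1 : ℝ) htendsucc
  -- key estimate, for every positive real ε
  have key : ∀ ε : ℝ, 0 < ε →
      atTop.limsup (fun k => ENNReal.ofReal (Real.log (Q (k + 1)) / Real.log (Q k)))
        ≤ ENNReal.ofReal (A / B + ε) := by
    intro ε hε
    obtain ⟨δ, hδpos, hδB, hδ4⟩ :
        ∃ δ : ℝ, 0 < δ ∧ δ ≤ B/2 ∧ δ * (4 * (A + B)) ≤ ε * B^2 := by
      refine ⟨min (B/2) (ε * B^2 / (4 * (A + B))), lt_min (by linarith) (by positivity),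
        min_le_left _ _, ?_⟩
      have h := min_le_right (B/2) (ε * B^2 / (4 * (A + B)))
      exact (le_div_iff₀ (by positivity : (0:ℝ) < 4 * (A + B))).1 h
    set m : ℝ := νr - δ with hmdef
    set w : ℝ := μr + δ with hwdef
    have hmB : m - 1 = B - δ := by rw [hmdef, hBdef]; ring
    have hwA : w - 1 = A + δ := by rw [hwdef, hAdef]; ring
    have hm1 : 1 < m := by
      have : 0 < m - 1 := by rw [hmB]; linarith
      linarith
    have hw1 : 1 < w := by
      have : 0 < w - 1 := by rw [hwA]; linarith
      linarith
    have hm1pos : (0 : ℝ) < m - 1 := by linarith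
    have hkey_frac : (w - 1)/(m - 1) ≤ A/B + ε/2 := by
      rw [hwA, hmB]
      exact aux_frac hBpos hApos hε hδpos hδB hδ4
    have hmlt : ENNReal.ofReal m < muHatTimesExp p ξ := by
      rw [hνeq]
      refine (ENNReal.ofReal_lt_ofReal_iff (by linarith : (0:ℝ) < νr)).2 ?_
      rw [hmdef]; linarith
    have hwgt : muTimesExp p ξ < ENNReal.ofReal w := by
      rw [hμeq]
      refine (ENNReal.ofReal_lt_ofReal_iff (by linarith : (0:ℝ) < w)).2 ?_
      rw [hwdef]; linarith
    obtain ⟨X₀, hX₀⟩ := eventually_atTop.1 (aux_mem_uniform_of_lt hmlt)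
    obtain ⟨J₀, hJ₀⟩ := eventually_atTop.1 (aux_eventually_norm_gt hξ x y hne hdec hwgt)
    set J : ℕ := max J₀ 1 with hJdef
    have hJ1 : 1 ≤ J := le_max_right _ _
    have hJ : ∀ j, J ≤ j →
        Q j ^ (-w) < ‖(y j : ℚ_[p]) * ξ - (x j : ℚ_[p])‖ := by
      intro j hj
      have := hJ₀ j (le_trans (le_max_left _ _) hj)
      rwa [← hQ j] at this
    clear_value m w
    -- the core claim
    have hclaim : ∀ᶠ k in atTop,
        (m - 1) * Real.log (Q (k + 1) - 1) ≤ (w - 1) * Real.log (Q k) := by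
      have hev1 : ∀ᶠ k in atTop, max X₀ 2 ≤ Q (k + 1) - 1 :=
        htendX.eventually_ge_atTop _
      have hev2 : ∀ᶠ k in atTop,
          (Q (k + 1) - 1) ^ (-(m - 1)) < ‖(y J : ℚ_[p]) * ξ - (x J : ℚ_[p])‖ :=
        htendX.eventually ((tendsto_rpow_neg_atTop (by linarith)).eventually
          (gt_mem_nhds (hLpos J)))
      filter_upwards [hev1, hev2] with k hk1 hk2
      set X : ℝ := Q (k + 1) - 1 with hXdef
      have hXQ : X < Q (k + 1) := by rw [hXdef]; linarith
      have hX2 : (2:ℝ) ≤ X := le_trans (le_max_right _ _) hk1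
      have hXX₀ : X₀ ≤ X := le_trans (le_max_left _ _) hk1
      have hXpos : (0:ℝ) < X := by linarith
      have hX1 : (1:ℝ) < X := by linarith
      clear_value X
      obtain ⟨x', y', hs_pos, hs_le, hnorm⟩ := hX₀ X hXX₀
      have habs_pos : 0 < |(x' : ℝ) * (y' : ℝ)| := Real.sqrt_pos.1 hs_pos
      have hxy0 : (x' : ℝ) * (y' : ℝ) ≠ 0 := by
        intro h; rw [h] at habs_pos; simp at habs_pos
      have hx'0 : x' ≠ 0 := by
        intro h; apply hxy0; rw [h]; simp
      have hy'0 : y' ≠ 0 := by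
        intro h; apply hxy0; rw [h]; simp
      set d : ℕ := Int.gcd x' y' with hddef
      have hd0 : 0 < d := Int.gcd_pos_of_ne_zero_left y' hx'0
      have hdz : ((d : ℤ)) ≠ 0 := by exact_mod_cast hd0.ne'
      set a : ℤ := x' / (d : ℤ) with hadef
      set b : ℤ := y' / (d : ℤ) with hbdef
      have hax : (d : ℤ) * a = x' := Int.mul_ediv_cancel' (Int.gcd_dvd_left _ _)
      have hby : (d : ℤ) * b = y' := Int.mul_ediv_cancel' (Int.gcd_dvd_right _ _)
      have hcop' : IsCoprime a b :=
        Int.isCoprime_iff_gcd_eq_one.2 (Int.gcd_div_gcd_div_gcd hd0)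
      have ha0 : a ≠ 0 := by
        intro h; apply hx'0; rw [← hax, h, mul_zero]
      have hb0 : b ≠ 0 := by
        intro h; apply hy'0; rw [← hby, h, mul_zero]
      set s : ℝ := Real.sqrt |(a : ℝ) * (b : ℝ)| with hsdef
      have hs1 : 1 ≤ s := aux_one_le_sqrt a b ha0 hb0
      have hspos : 0 < s := by linarith
      have hxr : (x' : ℝ) = (d : ℝ) * (a : ℝ) := by
        exact_mod_cast (congrArg (Int.cast : ℤ → ℝ) hax).symm
      have hyr : (y' : ℝ) = (d : ℝ) * (b : ℝ) := by
        exact_mod_cast (congrArg (Int.cast : ℤ → ℝ) hby).symm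
      have hsd : Real.sqrt |(x' : ℝ) * (y' : ℝ)| = (d : ℝ) * s := by
        have hprod : (x' : ℝ) * (y' : ℝ) = (d : ℝ)^2 * ((a : ℝ) * (b : ℝ)) := by
          rw [hxr, hyr]; ring
        rw [hprod, abs_mul, abs_of_nonneg (by positivity : (0:ℝ) ≤ (d : ℝ)^2),
          Real.sqrt_mul (by positivity), Real.sqrt_sq (by positivity)]
      have hds_le : (d : ℝ) * s ≤ X := by rw [← hsd]; exact hs_le
      have hnf : ‖(y' : ℚ_[p]) * ξ - (x' : ℚ_[p])‖
          = ‖((d : ℤ) : ℚ_[p])‖ * ‖(b : ℚ_[p]) * ξ - (a : ℚ_[p])‖ := by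
        rw [← hax, ← hby, ← norm_mul]
        congr 1
        push_cast
        ring
      have hdn_pos : 0 < ‖((d : ℤ) : ℚ_[p])‖ :=
        norm_pos_iff.2 (Int.cast_ne_zero.2 hdz)
      have hinvd : 1 / ‖((d : ℤ) : ℚ_[p])‖ ≤ (d : ℝ) := by
        rw [div_le_iff₀ hdn_pos]
        have h1d := aux_one_le_abs_mul_norm (p := p) (d : ℤ) hdz
        have hcastd : ((d : ℤ) : ℝ) = (d : ℝ) := by push_cast; ring
        have habs : |((d : ℤ) : ℝ)| = (d : ℝ) := by
          rw [hcastd, abs_of_nonneg (by positivity : (0:ℝ) ≤ (d : ℝ))]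
        calc (1:ℝ) ≤ |((d : ℤ) : ℝ)| * ‖((d : ℤ) : ℚ_[p])‖ := h1d
          _ = (d : ℝ) * ‖((d : ℤ) : ℚ_[p])‖ := by rw [habs]
      have hnorm' : ‖((d : ℤ) : ℚ_[p])‖ * ‖(b : ℚ_[p]) * ξ - (a : ℚ_[p])‖ ≤ X ^ (-m) := by
        rw [← hnf]; exact hnorm
      have hba : ‖(b : ℚ_[p]) * ξ - (a : ℚ_[p])‖ ≤ X ^ (-m) * (d : ℝ) := by
        have h2 : ‖(b : ℚ_[p]) * ξ - (a : ℚ_[p])‖ ≤ X ^ (-m) / ‖((d : ℤ) : ℚ_[p])‖ := by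
          rw [le_div_iff₀ hdn_pos, mul_comm]
          exact hnorm'
        calc ‖(b : ℚ_[p]) * ξ - (a : ℚ_[p])‖ ≤ X ^ (-m) / ‖((d : ℤ) : ℚ_[p])‖ := h2
          _ = X ^ (-m) * (1 / ‖((d : ℤ) : ℚ_[p])‖) := by ring
          _ ≤ X ^ (-m) * (d : ℝ) :=
              mul_le_mul_of_nonneg_left hinvd (Real.rpow_nonneg hXpos.le _)
      have hdX : (d : ℝ) ≤ X / s := (le_div_iff₀ hspos).2 hds_le
      have hXpow : X ^ (-m) * X = X ^ (-(m - 1)) := by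
        rw [show -(m - 1) = -m + 1 by ring, Real.rpow_add hXpos, Real.rpow_one]
      have hba2 : ‖(b : ℚ_[p]) * ξ - (a : ℚ_[p])‖ ≤ X ^ (-(m - 1)) / s := by
        calc ‖(b : ℚ_[p]) * ξ - (a : ℚ_[p])‖ ≤ X ^ (-m) * (d : ℝ) := hba
          _ ≤ X ^ (-m) * (X / s) :=
              mul_le_mul_of_nonneg_left hdX (Real.rpow_nonneg hXpos.le _)
          _ = (X ^ (-m) * X) / s := by ring
          _ = X ^ (-(m - 1)) / s := by rw [hXpow]
      -- the index j
      set Pred : ℕ → Prop := fun i => Q i ≤ s with hPreddef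
      set j : ℕ := Nat.findGreatest Pred k with hjdef
      have hjk : j ≤ k := Nat.findGreatest_le k
      have hsQ : s < Q (j + 1) := by
        rcases lt_or_eq_of_le hjk with hlt | heq
        · by_contra hcon
          push_neg at hcon
          exact Nat.findGreatest_is_greatest (by omega : j < j + 1) (by omega : j + 1 ≤ k) hcon
        · have hsX : s ≤ X := by
            calc s = 1 * s := (one_mul s).symm
              _ ≤ (d : ℝ) * s := by
                  apply mul_le_mul_of_nonneg_right _ hspos.le
                  exact_mod_cast hd0
              _ ≤ X := hds_le
          rw [heq]
          exact lt_of_le_of_lt hsX hXQ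
      have hLj_le : ‖(y j : ℚ_[p]) * ξ - (x j : ℚ_[p])‖ ≤ X ^ (-(m - 1)) / s :=
        le_trans (hbest j a b hcop' ha0 hb0 hsQ) hba2
      have hLj_le' : ‖(y j : ℚ_[p]) * ξ - (x j : ℚ_[p])‖ ≤ X ^ (-(m - 1)) :=
        le_trans hLj_le (div_le_self (by positivity) hs1)
      have hjJ : J ≤ j := by
        by_contra hcon
        push_neg at hcon
        have hJlt := hdec hcon
        simp only at hJlt
        have h4 : ‖(y j : ℚ_[p]) * ξ - (x j : ℚ_[p])‖
            < ‖(y J : ℚ_[p]) * ξ - (x J : ℚ_[p])‖ := lt_of_le_of_lt hLj_le' hk2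
        exact absurd hJlt (not_lt.2 h4.le)
      have hQjs : Q j ≤ s := by
        have hjpos : 0 < j := by omega
        obtain ⟨i, hi0, hik, hPi⟩ := Nat.findGreatest_pos.1 (hjdef ▸ hjpos)
        exact Nat.findGreatest_spec hik hPi
      have hQjpos : (0:ℝ) < Q j := lt_of_lt_of_le one_pos (hQ1 j)
      have hwj := hJ j hjJ
      have hchain : Q j ^ (-w) < X ^ (-(m - 1)) / Q j := by
        calc Q j ^ (-w) < ‖(y j : ℚ_[p]) * ξ - (x j : ℚ_[p])‖ := hwj
          _ ≤ X ^ (-(m - 1)) / s := hLj_le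
          _ ≤ X ^ (-(m - 1)) / Q j :=
              div_le_div_of_nonneg_left (Real.rpow_nonneg hXpos.le _) hQjpos hQjs
      have h5 : Q j ^ (-w) * Q j < X ^ (-(m - 1)) := (lt_div_iff₀ hQjpos).1 hchain
      have h6 : Q j ^ (-(w - 1)) < X ^ (-(m - 1)) := by
        rw [show -(w - 1) = -w + 1 by ring, Real.rpow_add hQjpos, Real.rpow_one]
        exact h5
      have h7 : (-(w - 1)) * Real.log (Q j) < (-(m - 1)) * Real.log X := by
        have hll := Real.log_lt_log (Real.rpow_pos_of_pos hQjpos _) h6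
        rwa [Real.log_rpow hQjpos, Real.log_rpow hXpos] at hll
      have h8 : Real.log (Q j) ≤ Real.log (Q k) := by
        rcases eq_or_lt_of_le hjk with heq | hlt
        · rw [heq]
        · exact (Real.log_lt_log hQjpos (hmono hlt)).le
      have h10 : (w - 1) * Real.log (Q j) ≤ (w - 1) * Real.log (Q k) :=
        mul_le_mul_of_nonneg_left h8 (by linarith)
      linarith [h7, h10]
    -- from the claim to the limsup bound
    have hεhalf : (0:ℝ) < ε/2 := by linarith
    have hg : Tendsto (fun t : ℝ => Real.log t - Real.log (t - 1)) atTop (𝓝 0) := by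
      have hin : Tendsto (fun t : ℝ => (t - 1)⁻¹) atTop (𝓝 0) := by
        have := tendsto_inv_atTop_zero.comp
          (tendsto_atTop_add_const_right atTop (-1 : ℝ) tendsto_id)
        simpa [Function.comp_def, sub_eq_add_neg] using this
      have h₂ : Tendsto (fun t : ℝ => 1 + (t - 1)⁻¹) atTop (𝓝 1) := by
        simpa using tendsto_const_nhds.add hin
      have h₁ : Tendsto (fun t : ℝ => t / (t - 1)) atTop (𝓝 1) := by
        apply Tendsto.congr' _ h₂
        filter_upwards [eventually_ge_atTop (2:ℝ)] with t ht
        have ht1 : t - 1 ≠ 0 := by linarith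
        field_simp
        ring
      have h₃ : Tendsto (fun t : ℝ => Real.log (t / (t - 1))) atTop (𝓝 0) := by
        have := (Real.continuousAt_log one_ne_zero).tendsto.comp h₁
        simpa [Function.comp_def, Real.log_one] using this
      apply Tendsto.congr' _ h₃
      filter_upwards [eventually_ge_atTop (2:ℝ)] with t ht
      rw [Real.log_div (by linarith) (by linarith)]
    have hev3 : ∀ᶠ k in atTop,
        Real.log (Q (k + 1)) - Real.log (Q (k + 1) - 1) < ε/2 :=
      htendsucc.eventually (hg.eventually (gt_mem_nhds hεhalf))
    have hlog1 : ∀ᶠ t : ℝ in atTop, 1 ≤ Real.log t := by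
      filter_upwards [eventually_ge_atTop (Real.exp 1)] with t ht
      have hh : Real.log (Real.exp 1) ≤ Real.log t :=
        (Real.log_le_log_iff (Real.exp_pos 1) (lt_of_lt_of_le (Real.exp_pos 1) ht)).2 ht
      rwa [Real.log_exp] at hh
    have hev4 : ∀ᶠ k in atTop, 1 ≤ Real.log (Q k) := htend.eventually hlog1
    apply Filter.limsup_le_of_le (by isBoundedDefault)
    filter_upwards [hclaim, hev3, hev4] with k h1 h3 h4
    apply ENNReal.ofReal_le_ofReal
    have hlogpos : (0:ℝ) < Real.log (Q k) := by linarith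
    rw [div_le_iff₀ hlogpos]
    have h2 : Real.log (Q (k + 1) - 1) ≤ (w - 1)/(m - 1) * Real.log (Q k) := by
      rw [div_mul_eq_mul_div, le_div_iff₀ hm1pos]
      linarith [h1]
    have h5 : (w - 1)/(m - 1) * Real.log (Q k) ≤ (A/B + ε/2) * Real.log (Q k) :=
      mul_le_mul_of_nonneg_right hkey_frac hlogpos.le
    calc Real.log (Q (k + 1)) ≤ Real.log (Q (k + 1) - 1) + ε/2 := by linarith
      _ ≤ (A/B + ε/2) * Real.log (Q k) + ε/2 := by linarith
      _ ≤ (A/B + ε/2) * Real.log (Q k) + (ε/2) * Real.log (Q k) := by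
          have h6 : ε/2 * 1 ≤ ε/2 * Real.log (Q k) :=
            mul_le_mul_of_nonneg_left h4 hεhalf.le
          linarith
      _ = (A/B + ε) * Real.log (Q k) := by ring
  -- conclude
  apply ENNReal.le_of_forall_pos_le_add
  intro ε hε _
  have hε' : (0:ℝ) < (ε : ℝ) := by exact_mod_cast hε
  calc atTop.limsup (fun k => ENNReal.ofReal (Real.log (Q (k + 1)) / Real.log (Q k)))
      ≤ ENNReal.ofReal (A / B + (ε : ℝ)) := key (ε : ℝ) hε'
    _ = ENNReal.ofReal (A / B) + ENNReal.ofReal (ε : ℝ) := by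
        rw [ENNReal.ofReal_add (by positivity) hε'.le]
    _ = ENNReal.ofReal (A / B) + (ε : ℝ≥0∞) := by rw [ENNReal.ofReal_coe_nnreal]
end
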